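/- arXiv:2502.04117 — 4 statements merged into one kernel-verified Lean document; each statement's English description precedes it below -/
import Mathlib

section
/- Let G=(V,E) be a connected graph and let P_p be site Bernoulli percolation with parameter p on G (each vertex independently open with probability p). For X ∼ P_p, a vertex i, let C_i(X) be the open cluster of i (empty if i is closed), and for A ⊂ V let C_A(X) = ∪_{i∈A} C_i(X). Then for any λ ≥ 0 and any A ⊂ V, E_p[exp(λ|C_A(X)|)] ≤ ∏_{i∈A} E_p[exp(λ|C_i(X)|)]. -/
open MeasureTheory
open scoped ENNReal

noncomputable section

/-- The subgraph of open sites: `i ∼ j` iff they are adjacent in `G` and both open in `X`. -/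
def openSubgraph {V : Type*} (G : SimpleGraph V) (X : V → Bool) : SimpleGraph V where
  Adj i j := G.Adj i j ∧ X i = true ∧ X j = true
  symm := ⟨fun i j h => ⟨h.1.symm, h.2.2, h.2.1⟩⟩
  loopless := ⟨fun i h => G.loopless.irrefl i h.1⟩

/-- The open cluster of the vertex `i` (empty if `i` is closed). -/
def percCluster {V : Type*} (G : SimpleGraph V) (X : V → Bool) (i : V) : Set V :=
  {j | X i = true ∧ (openSubgraph G X).Reachable i j}

/-- `C_A(X) = ⋃_{i ∈ A} C_i(X)`. -/
def percClusterSet {V : Type*} (G : SimpleGraph V) (X : V → Bool) (A : Set V) : Set V :=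
  ⋃ i ∈ A, percCluster G X i

/-- Site Bernoulli percolation with parameter `p`: the product of Bernoulli(p)
measures on configurations `V → Bool`. -/
def bernoulliProduct (V : Type*) [Fintype V] (p : ℝ≥0∞) (hp : p ≤ 1) :
    Measure (V → Bool) :=
  Measure.pi fun _ => (PMF.ofFintype (fun b => cond b p (1 - p))
    (by rw [Fintype.sum_bool]; exact add_tsub_cancel_of_le hp)).toMeasure

namespace PercAux

variable {V : Type*} {G : SimpleGraph V}

lemma osAdj {X : V → Bool} {i j : V} :
    (openSubgraph G X).Adj i j ↔ G.Adj i j ∧ X i = true ∧ X j = true := Iff.rfl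

/-- Invariance of a predicate along reachability. -/
lemma walk_invariant {H : SimpleGraph V} {P : V → Prop}
    (hstep : ∀ a b, P a → H.Adj a b → P b) {a u : V}
    (h : H.Reachable a u) (ha : P a) : P u := by
  obtain ⟨w⟩ := h
  revert ha
  induction w with
  | nil => exact fun h => h
  | cons hab _ ih => exact fun ha => ih (hstep _ _ ha hab)

lemma mem_cluster_open {X : V → Bool} {i j : V} (h : j ∈ percCluster G X i) :
    X j = true :=
  walk_invariant (H := openSubgraph G X) (P := fun v => X v = true)
    (fun _ _ _ hab => (osAdj.1 hab).2.2) h.2 h.1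

lemma reach_transfer {X Y : V → Bool} {a u : V}
    (hXY : ∀ v, (openSubgraph G X).Reachable a v → X v = Y v)
    (h : (openSubgraph G X).Reachable a u) : (openSubgraph G Y).Reachable a u := by
  have key : (openSubgraph G X).Reachable a u ∧ (openSubgraph G Y).Reachable a u := by
    refine walk_invariant (P := fun v =>
      (openSubgraph G X).Reachable a v ∧ (openSubgraph G Y).Reachable a v)
      ?_ h ⟨SimpleGraph.Reachable.refl a, SimpleGraph.Reachable.refl a⟩
    rintro b c ⟨hXb, hYb⟩ hadj
    refine ⟨hXb.trans hadj.reachable, hYb.trans (SimpleGraph.Adj.reachable ?_)⟩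
    have h1 : X b = Y b := hXY b hXb
    have h2 : X c = Y c := hXY c (hXb.trans hadj.reachable)
    exact osAdj.2 ⟨(osAdj.1 hadj).1, h1 ▸ (osAdj.1 hadj).2.1, h2 ▸ (osAdj.1 hadj).2.2⟩
  exact key.2

lemma openSubgraph_mono {X Y : V → Bool} (hXY : ∀ v, X v = true → Y v = true) :
    openSubgraph G X ≤ openSubgraph G Y := by
  intro a b h
  exact osAdj.2 ⟨(osAdj.1 h).1, hXY _ (osAdj.1 h).2.1, hXY _ (osAdj.1 h).2.2⟩

lemma cluster_mono {X Y : V → Bool} (hXY : ∀ v, X v = true → Y v = true) (i : V) :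
    percCluster G X i ⊆ percCluster G Y i := by
  rintro j ⟨hi, hr⟩
  exact ⟨hXY i hi, hr.mono (openSubgraph_mono hXY)⟩

lemma clusterSet_mono {X Y : V → Bool} (hXY : ∀ v, X v = true → Y v = true) (A : Set V) :
    percClusterSet G X A ⊆ percClusterSet G Y A := by
  refine Set.iUnion₂_mono fun i _ => cluster_mono hXY i

section FinV

variable [Fintype V] [DecidableEq V]

open Classical in
/-- The set of vertices which determine the event `C_i = S`. -/
noncomputable def bnd (G : SimpleGraph V) (S : Finset V) (i : V) : Finset V :=
  (S ∪ {i}) ∪ Finset.univ.filter (fun v => ∃ s ∈ S, G.Adj s v)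

lemma subset_bnd {S : Finset V} {i : V} : S ⊆ bnd G S i := fun v hv =>
  Finset.mem_union.2 (Or.inl (Finset.mem_union.2 (Or.inl hv)))

lemma self_mem_bnd {S : Finset V} {i : V} : i ∈ bnd G S i :=
  Finset.mem_union.2 (Or.inl (Finset.mem_union.2 (Or.inr (Finset.mem_singleton_self i))))

lemma adj_mem_bnd {S : Finset V} {i s v : V} (hs : s ∈ S) (h : G.Adj s v) :
    v ∈ bnd G S i := by
  classical
  refine Finset.mem_union.2 (Or.inr ?_)
  rw [Finset.mem_filter]
  exact ⟨Finset.mem_univ _, by classical exact ⟨s, hs, h⟩⟩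

/-- The event `C_i = S` is determined by the coordinates in `bnd G S i`. -/
lemma cluster_determined {S : Finset V} {i : V} {X Y : V → Bool}
    (hXY : ∀ v ∈ bnd G S i, X v = Y v)
    (h : percCluster G X i = ↑S) : percCluster G Y i = ↑S := by
  by_cases hXi : X i = true
  · have hYi : Y i = true := (hXY i self_mem_bnd) ▸ hXi
    have hiS : i ∈ (S : Set V) := h ▸ ⟨hXi, SimpleGraph.Reachable.refl i⟩
    apply Set.Subset.antisymm
    · -- percCluster G Y i ⊆ S
      rintro u ⟨-, hr⟩
      have : u ∈ (S : Set V) := by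
        refine walk_invariant (P := fun v => v ∈ (S : Set V)) ?_ hr hiS
        rintro a b ha hab
        obtain ⟨hGab, hYa, hYb⟩ := osAdj.1 hab
        have hbB : b ∈ bnd G S i := adj_mem_bnd (Finset.mem_coe.1 ha) hGab
        have hXb : X b = true := (hXY b hbB).symm ▸ hYb
        have hXa : X a = true := mem_cluster_open (h ▸ ha : a ∈ percCluster G X i)
        have hra : (openSubgraph G X).Reachable i a := (h ▸ ha : a ∈ percCluster G X i).2
        have : b ∈ percCluster G X i :=
          ⟨hXi, hra.trans (SimpleGraph.Adj.reachable (osAdj.2 ⟨hGab, hXa, hXb⟩))⟩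
        exact h ▸ this
      exact this
    · -- S ⊆ percCluster G Y i
      intro u hu
      have hu' : u ∈ percCluster G X i := h ▸ hu
      refine ⟨hYi, reach_transfer ?_ hu'.2⟩
      intro v hv
      have hvS : v ∈ (S : Set V) := h ▸ (⟨hXi, hv⟩ : v ∈ percCluster G X i)
      exact hXY v (subset_bnd (Finset.mem_coe.1 hvS))
  · have hE : percCluster G X i = (∅ : Set V) := by
      ext u; simp [percCluster, hXi]
    have hS : (S : Set V) = ∅ := by rw [← h, hE]
    have hYi : Y i = X i := (hXY i self_mem_bnd).symm
    have : percCluster G Y i = (∅ : Set V) := by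
      ext u; simp [percCluster, hYi, hXi]
    rw [this, hS]

open Classical in
/-- The configuration `X` with all sites in `bnd G S i` closed. -/
noncomputable def maskCfg (G : SimpleGraph V) (S : Finset V) (i : V) (X : V → Bool) :
    V → Bool :=
  fun v => if v ∈ bnd G S i then false else X v

lemma maskCfg_le {S : Finset V} {i : V} {X : V → Bool} (v : V)
    (h : maskCfg G S i X v = true) : X v = true := by
  unfold maskCfg at h
  split at h
  · exact absurd h (by simp)
  · exact h

/-- Key containment: on the event `C_i = S`, the cluster of `insert i A` is contained
in `S` together with the cluster of `A` in the masked configuration. -/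
lemma cluster_containment {S A : Finset V} {i : V} {X : V → Bool}
    (h : percCluster G X i = ↑S) :
    percClusterSet G X (insert i (A : Set V)) ⊆
      ↑S ∪ percClusterSet G (maskCfg G S i X) (A : Set V) := by
  intro u hu
  rw [percClusterSet, Set.mem_iUnion₂] at hu
  obtain ⟨j, hj, hu⟩ := hu
  rcases Set.mem_insert_iff.1 hj with rfl | hjA
  · exact Or.inl (h ▸ hu)
  · by_cases huS : u ∈ (S : Set V)
    · exact Or.inl huS
    · right
      obtain ⟨hXj, hrj⟩ := hu
      -- the cluster of j is disjoint from S
      have hdisj : ∀ v, v ∈ percCluster G X j → v ∉ (S : Set V) := by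
        intro v hv hvS
        apply huS
        have h1 : (openSubgraph G X).Reachable i v := (h ▸ hvS : v ∈ percCluster G X i).2
        have hXi : X i = true := (h ▸ hvS : v ∈ percCluster G X i).1
        have h2 : (openSubgraph G X).Reachable j v := hv.2
        have : (openSubgraph G X).Reachable i u := (h1.trans h2.symm).trans hrj
        exact h ▸ (⟨hXi, this⟩ : u ∈ percCluster G X i)
      -- the cluster of j is disjoint from bnd G S i
      have hdisjB : ∀ v, v ∈ percCluster G X j → v ∉ bnd G S i := by
        intro v hv hvB
        rcases Finset.mem_union.1 hvB with hv1 | hv2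
        · rcases Finset.mem_union.1 hv1 with hvS | hvi
          · exact hdisj v hv (Finset.mem_coe.2 hvS)
          · -- v = i : then i is open, hence i ∈ S, contradiction with hdisj
            have hvi' : v = i := Finset.mem_singleton.1 hvi
            subst hvi'
            have hXv : X v = true := mem_cluster_open hv
            have : v ∈ (S : Set V) := h ▸ (⟨hXv, SimpleGraph.Reachable.refl v⟩ :
              v ∈ percCluster G X v)
            exact hdisj v hv this
        · -- v adjacent to some s ∈ S
          classical
          rw [Finset.mem_filter] at hv2
          obtain ⟨-, s, hsS, hadj⟩ := hv2
          have hsC : s ∈ percCluster G X i := h ▸ (Finset.mem_coe.2 hsS)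
          have hXs : X s = true := mem_cluster_open hsC
          have hXv : X v = true := mem_cluster_open hv
          have : v ∈ percCluster G X i :=
            ⟨hsC.1, hsC.2.trans (SimpleGraph.Adj.reachable (osAdj.2 ⟨hadj, hXs, hXv⟩))⟩
          exact hdisj v hv (h ▸ this)
      -- transfer reachability to masked configuration
      have hagree : ∀ v, (openSubgraph G X).Reachable j v → X v = maskCfg G S i X v := by
        intro v hv
        have : v ∉ bnd G S i := hdisjB v ⟨hXj, hv⟩
        unfold maskCfg
        rw [if_neg this]
      have hjB : j ∉ bnd G S i := hdisjB j ⟨hXj, SimpleGraph.Reachable.refl j⟩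
      have hmj : maskCfg G S i X j = true := by
        unfold maskCfg; rw [if_neg hjB]; exact hXj
      have hr' : (openSubgraph G (maskCfg G S i X)).Reachable j u :=
        reach_transfer hagree hrj
      rw [percClusterSet, Set.mem_iUnion₂]
      exact ⟨j, hjA, hmj, hr'⟩

end FinV

/-! ### The weight function and sums -/

/-- The single-site weight. -/
noncomputable def wR (p : ℝ≥0∞) : Bool → ℝ := fun b => bif b then p.toReal else (1 - p).toReal

/-- The weight of a configuration. -/
noncomputable def W (p : ℝ≥0∞) [Fintype V] (X : V → Bool) : ℝ := ∏ v, wR p (X v)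

lemma wR_nonneg (p : ℝ≥0∞) (b : Bool) : 0 ≤ wR p b := by
  cases b <;> simp [wR]

lemma wR_sum {p : ℝ≥0∞} (hp : p ≤ 1) : wR p true + wR p false = 1 := by
  have hpt : p ≠ ⊤ := (hp.trans_lt ENNReal.one_lt_top).ne
  have h1pt : (1 - p) ≠ ⊤ := ((tsub_le_self).trans_lt ENNReal.one_lt_top).ne
  have : wR p true + wR p false = (p + (1 - p)).toReal := by
    rw [ENNReal.toReal_add hpt h1pt]; rfl
  rw [this, add_tsub_cancel_of_le hp, ENNReal.toReal_one]

lemma W_nonneg (p : ℝ≥0∞) [Fintype V] (X : V → Bool) : 0 ≤ W p X :=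
  Finset.prod_nonneg fun v _ => wR_nonneg p (X v)

lemma sum_W_general {ι : Type*} [Fintype ι] [DecidableEq ι] {p : ℝ≥0∞} (hp : p ≤ 1) :
    ∑ f : ι → Bool, ∏ v, wR p (f v) = 1 := by
  classical
  rw [← Fintype.piFinset_univ, ← Finset.prod_univ_sum]
  have : ∀ i : ι, (∑ j ∈ (Finset.univ : Finset Bool), wR p j) = 1 := by
    intro i
    rw [Fintype.sum_bool]
    exact wR_sum hp
  rw [Finset.prod_congr rfl (fun i _ => this i), Finset.prod_const_one]

end PercAux

end

noncomputable section

namespace PercAux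

variable {V : Type*} [Fintype V] [DecidableEq V]

lemma integral_eq {p : ℝ≥0∞} (hp : p ≤ 1) (f : (V → Bool) → ℝ) :
    ∫ X, f X ∂(bernoulliProduct V p hp) = ∑ X : V → Bool, W p X * f X := by
  have hP : IsProbabilityMeasure (bernoulliProduct V p hp) := by
    unfold bernoulliProduct; infer_instance
  rw [integral_fintype (Integrable.of_finite)]
  refine Finset.sum_congr rfl fun X _ => ?_
  have hsing : (bernoulliProduct V p hp) {X} = ∏ v, cond (X v) p (1 - p) := by
    rw [bernoulliProduct, ← Set.univ_pi_singleton X, Measure.pi_pi]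
    refine Finset.prod_congr rfl fun v _ => ?_
    rw [PMF.toMeasure_apply_singleton _ _ (measurableSet_singleton _), PMF.ofFintype_apply]
  rw [Measure.real, hsing, ENNReal.toReal_prod, smul_eq_mul]
  congr 1
  refine Finset.prod_congr rfl fun v _ => ?_
  cases X v <;> rfl

lemma prod_univ_congr {α : Type*} {M : Type*} [CommMonoid M] (i1 i2 : Fintype α)
    (f g : α → M) (h : ∀ a, f a = g a) :
    @Finset.prod α M _ (@Finset.univ α i1) f = @Finset.prod α M _ (@Finset.univ α i2) g := by
  cases Subsingleton.elim i1 i2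
  exact Finset.prod_congr rfl fun a _ => h a

/-- Factorization of sums over configurations when the two factors depend on
disjoint sets of coordinates. -/
lemma sum_split {p : ℝ≥0∞} (hp : p ≤ 1) (B : Finset V) (F Fg : (V → Bool) → ℝ)
    (hF : ∀ X Y : V → Bool, (∀ v ∈ B, X v = Y v) → F X = F Y)
    (hG : ∀ X Y : V → Bool, (∀ v ∉ B, X v = Y v) → Fg X = Fg Y) :
    ∑ X : V → Bool, W p X * (F X * Fg X)
      = (∑ X : V → Bool, W p X * F X) * (∑ X : V → Bool, W p X * Fg X) := by
  classical
  set e := Equiv.piEquivPiSubtypeProd (fun v => v ∈ B) (fun _ => Bool) with he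
  set cmb : ({v // v ∈ B} → Bool) → ({v // ¬ v ∈ B} → Bool) → (V → Bool) :=
    fun Y Z => e.symm (Y, Z) with hcmb
  have hcmb_mem : ∀ Y Z (v : {v // v ∈ B}), cmb Y Z ↑v = Y v := by
    intro Y Z v
    rw [hcmb]; simp [he, Equiv.piEquivPiSubtypeProd_symm_apply, v.2]
  have hcmb_not : ∀ Y Z (v : {v // ¬ v ∈ B}), cmb Y Z ↑v = Z v := by
    intro Y Z v
    rw [hcmb]; simp [he, Equiv.piEquivPiSubtypeProd_symm_apply, v.2]
  have hW : ∀ Y Z, W p (cmb Y Z) = (∏ v, wR p (Y v)) * (∏ v, wR p (Z v)) := by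
    intro Y Z
    rw [W, ← Fintype.prod_subtype_mul_prod_subtype (fun v => v ∈ B)
      (fun v => wR p (cmb Y Z v))]
    congr 1
    · exact prod_univ_congr _ _ _ _ fun v => by rw [hcmb_mem]
    · exact prod_univ_congr _ _ _ _ fun v => by rw [hcmb_not]
  set z0 : {v // ¬ v ∈ B} → Bool := fun _ => false with hz0
  set y0 : {v // v ∈ B} → Bool := fun _ => false with hy0
  have hFc : ∀ Y Z, F (cmb Y Z) = F (cmb Y z0) := by
    intro Y Z
    refine hF _ _ fun v hv => ?_
    rw [show v = ((⟨v, hv⟩ : {v // v ∈ B}) : V) from rfl, hcmb_mem, hcmb_mem]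
  have hGc : ∀ Y Z, Fg (cmb Y Z) = Fg (cmb y0 Z) := by
    intro Y Z
    refine hG _ _ fun v hv => ?_
    rw [show v = ((⟨v, hv⟩ : {v // ¬ v ∈ B}) : V) from rfl, hcmb_not, hcmb_not]
  have expand : ∀ h : (V → Bool) → ℝ, (∑ X : V → Bool, W p X * h X)
      = ∑ Y : {v // v ∈ B} → Bool, ∑ Z : {v // ¬ v ∈ B} → Bool,
          ((∏ v, wR p (Y v)) * (∏ v, wR p (Z v))) * h (cmb Y Z) := by
    intro h
    rw [← Equiv.sum_comp e.symm (fun X => W p X * h X), Fintype.sum_prod_type]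
    refine Finset.sum_congr rfl fun Y _ => Finset.sum_congr rfl fun Z _ => ?_
    rw [show W p (e.symm (Y, Z)) = W p (cmb Y Z) from rfl, hW]
  rw [expand, expand, expand]
  have LHS_eq : (∑ Y : {v // v ∈ B} → Bool, ∑ Z : {v // ¬ v ∈ B} → Bool,
        ((∏ v, wR p (Y v)) * (∏ v, wR p (Z v))) * (F (cmb Y Z) * Fg (cmb Y Z)))
      = (∑ Y : {v // v ∈ B} → Bool, (∏ v, wR p (Y v)) * F (cmb Y z0))
        * (∑ Z : {v // ¬ v ∈ B} → Bool, (∏ v, wR p (Z v)) * Fg (cmb y0 Z)) := by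
    rw [Finset.sum_mul_sum]
    refine Finset.sum_congr rfl fun Y _ => Finset.sum_congr rfl fun Z _ => ?_
    rw [hFc Y Z, hGc Y Z]; ring
  have F_eq : (∑ Y : {v // v ∈ B} → Bool, ∑ Z : {v // ¬ v ∈ B} → Bool,
        ((∏ v, wR p (Y v)) * (∏ v, wR p (Z v))) * F (cmb Y Z))
      = ∑ Y : {v // v ∈ B} → Bool, (∏ v, wR p (Y v)) * F (cmb Y z0) := by
    have h1 : ∀ Y : {v // v ∈ B} → Bool,
        (∑ Z : {v // ¬ v ∈ B} → Bool,
          ((∏ v, wR p (Y v)) * (∏ v, wR p (Z v))) * F (cmb Y Z))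
        = ((∏ v, wR p (Y v)) * F (cmb Y z0))
            * ∑ Z : {v // ¬ v ∈ B} → Bool, ∏ v, wR p (Z v) := by
      intro Y
      rw [Finset.mul_sum]
      refine Finset.sum_congr rfl fun Z _ => ?_
      rw [hFc Y Z]; ring
    rw [Finset.sum_congr rfl fun Y _ => h1 Y]
    refine Finset.sum_congr rfl fun Y _ => ?_
    rw [sum_W_general hp, mul_one]
  have G_eq : (∑ Y : {v // v ∈ B} → Bool, ∑ Z : {v // ¬ v ∈ B} → Bool,
        ((∏ v, wR p (Y v)) * (∏ v, wR p (Z v))) * Fg (cmb Y Z))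
      = ∑ Z : {v // ¬ v ∈ B} → Bool, (∏ v, wR p (Z v)) * Fg (cmb y0 Z) := by
    have h1 : ∀ Y : {v // v ∈ B} → Bool,
        (∑ Z : {v // ¬ v ∈ B} → Bool,
          ((∏ v, wR p (Y v)) * (∏ v, wR p (Z v))) * Fg (cmb Y Z))
        = (∏ v, wR p (Y v))
            * ∑ Z : {v // ¬ v ∈ B} → Bool, (∏ v, wR p (Z v)) * Fg (cmb y0 Z) := by
      intro Y
      rw [Finset.mul_sum]
      refine Finset.sum_congr rfl fun Z _ => ?_
      rw [hGc Y Z]; ring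
    rw [Finset.sum_congr rfl fun Y _ => h1 Y, ← Finset.sum_mul, sum_W_general hp, one_mul]
  rw [LHS_eq, F_eq, G_eq]

variable {G : SimpleGraph V}

/-- The cluster of `i` as a `Finset`. -/
noncomputable def clF (G : SimpleGraph V) (X : V → Bool) (i : V) : Finset V :=
  (Set.toFinite (percCluster G X i)).toFinset

lemma clF_coe (X : V → Bool) (i : V) : (↑(clF G X i) : Set V) = percCluster G X i :=
  Set.Finite.coe_toFinset _

lemma clF_card (X : V → Bool) (i : V) : (clF G X i).card = (percCluster G X i).ncard :=
  (Set.ncard_eq_toFinset_card _ _).symm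

/-- The key one-vertex-peeling inequality. -/
lemma step_lemma {p : ℝ≥0∞} (hp : p ≤ 1) {lam : ℝ} (hlam : 0 ≤ lam) (i : V) (A : Finset V) :
    ∑ X : V → Bool, W p X *
        Real.exp (lam * ((percClusterSet G X (↑(insert i A) : Set V)).ncard : ℝ))
      ≤ (∑ X : V → Bool, W p X * Real.exp (lam * ((percCluster G X i).ncard : ℝ)))
        * (∑ X : V → Bool, W p X *
            Real.exp (lam * ((percClusterSet G X (↑A : Set V)).ncard : ℝ))) := by
  classical
  set fA : (V → Bool) → ℝ :=
    fun X => Real.exp (lam * ((percClusterSet G X (↑A : Set V)).ncard : ℝ)) with hfA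
  set fI : (V → Bool) → ℝ :=
    fun X => Real.exp (lam * ((percClusterSet G X (↑(insert i A) : Set V)).ncard : ℝ)) with hfI
  set eS : Finset V → ℝ := fun S => Real.exp (lam * (S.card : ℝ)) with heS
  set Φ : Finset V → (V → Bool) → ℝ := fun S X => if clF G X i = S then 1 else 0 with hΦ
  set EA : ℝ := ∑ X : V → Bool, W p X * fA X with hEA
  set P : Finset V → ℝ := fun S => ∑ X : V → Bool, W p X * Φ S X with hP
  have hΦsum : ∀ X, ∑ S : Finset V, Φ S X = 1 := by
    intro X
    simp only [hΦ]
    rw [Finset.sum_ite_eq Finset.univ (clF G X i) (fun _ => (1 : ℝ)),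
      if_pos (Finset.mem_univ _)]
  have hΦnonneg : ∀ S X, 0 ≤ Φ S X := by
    intro S X; simp only [hΦ]; split <;> norm_num
  have heSnonneg : ∀ S, 0 ≤ eS S := fun S => (Real.exp_pos _).le
  have hPnonneg : ∀ S, 0 ≤ P S := fun S =>
    Finset.sum_nonneg fun X _ => mul_nonneg (W_nonneg p X) (hΦnonneg S X)
  -- partition according to the value of the cluster of i
  have step1 : ∑ X : V → Bool, W p X * fI X
      = ∑ S : Finset V, ∑ X : V → Bool, Φ S X * (W p X * fI X) := by
    rw [Finset.sum_comm]
    refine Finset.sum_congr rfl fun X _ => ?_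
    rw [← Finset.sum_mul, hΦsum X, one_mul]
  -- termwise bound
  have step2 : ∀ (S : Finset V) (X : V → Bool),
      Φ S X * (W p X * fI X)
        ≤ W p X * (Φ S X * (eS S * fA (maskCfg G S i X))) := by
    intro S X
    by_cases hS : clF G X i = S
    · have hcl : percCluster G X i = (↑S : Set V) := by rw [← hS, clF_coe]
      have hsub := cluster_containment (A := A) hcl
      have h1 : (percClusterSet G X (insert i (↑A : Set V))).ncard
          ≤ S.card + (percClusterSet G (maskCfg G S i X) (↑A : Set V)).ncard := by
        refine le_trans (Set.ncard_le_ncard hsub (Set.toFinite _)) ?_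
        refine le_trans (Set.ncard_union_le _ _) ?_
        rw [Set.ncard_coe_finset]
      have hcoe : (↑(insert i A) : Set V) = insert i (↑A : Set V) := Finset.coe_insert i A
      have h2 : fI X ≤ eS S * fA (maskCfg G S i X) := by
        simp only [hfI, hfA, heS]
        rw [hcoe, ← Real.exp_add, ← mul_add]
        apply Real.exp_le_exp.2
        refine mul_le_mul_of_nonneg_left ?_ hlam
        exact_mod_cast h1
      have hcalc : Φ S X * (W p X * fI X) = W p X * (Φ S X * fI X) := by ring
      rw [hcalc]
      refine mul_le_mul_of_nonneg_left ?_ (W_nonneg p X)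
      exact mul_le_mul_of_nonneg_left h2 (hΦnonneg S X)
    · simp only [hΦ]
      rw [if_neg hS]
      simp
  -- factorization for each S
  have hsplit : ∀ S : Finset V,
      ∑ X : V → Bool, W p X * (Φ S X * (eS S * fA (maskCfg G S i X)))
        = P S * (∑ X : V → Bool, W p X * (eS S * fA (maskCfg G S i X))) := by
    intro S
    rw [hP]
    refine sum_split hp (bnd G S i) (Φ S) (fun X => eS S * fA (maskCfg G S i X)) ?_ ?_
    · intro X Y hXY
      simp only [hΦ]
      have hiff : clF G X i = S ↔ clF G Y i = S := by
        rw [← Finset.coe_inj, ← Finset.coe_inj, clF_coe, clF_coe]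
        exact ⟨cluster_determined hXY, cluster_determined fun v hv => (hXY v hv).symm⟩
      by_cases h : clF G X i = S
      · rw [if_pos h, if_pos (hiff.1 h)]
      · rw [if_neg h, if_neg (fun hc => h (hiff.2 hc))]
    · intro X Y hXY
      have : maskCfg G S i X = maskCfg G S i Y := by
        funext v
        unfold maskCfg
        split
        · rfl
        · next hv => exact hXY v hv
      rw [this]
  -- monotonicity in the masked configuration
  have hmono : ∀ S : Finset V,
      ∑ X : V → Bool, W p X * (eS S * fA (maskCfg G S i X)) ≤ eS S * EA := by
    intro S
    have h1 : ∀ X : V → Bool, fA (maskCfg G S i X) ≤ fA X := by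
      intro X
      simp only [hfA]
      apply Real.exp_le_exp.2
      refine mul_le_mul_of_nonneg_left ?_ hlam
      have hsub : percClusterSet G (maskCfg G S i X) (↑A : Set V)
          ⊆ percClusterSet G X (↑A : Set V) :=
        clusterSet_mono (fun v hv => maskCfg_le v hv) _
      exact_mod_cast Set.ncard_le_ncard hsub (Set.toFinite _)
    rw [hEA, Finset.mul_sum]
    refine Finset.sum_le_sum fun X _ => ?_
    have : eS S * (W p X * fA X) = W p X * (eS S * fA X) := by ring
    rw [this]
    refine mul_le_mul_of_nonneg_left ?_ (W_nonneg p X)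
    exact mul_le_mul_of_nonneg_left (h1 X) (heSnonneg S)
  -- put everything together
  have final1 : ∑ X : V → Bool, W p X * fI X ≤ (∑ S : Finset V, P S * eS S) * EA := by
    rw [step1, Finset.sum_mul]
    refine Finset.sum_le_sum fun S _ => ?_
    have t1 : ∑ X : V → Bool, Φ S X * (W p X * fI X)
        ≤ ∑ X : V → Bool, W p X * (Φ S X * (eS S * fA (maskCfg G S i X))) :=
      Finset.sum_le_sum fun X _ => step2 S X
    refine t1.trans ?_
    rw [hsplit S]
    have t2 : P S * (∑ X : V → Bool, W p X * (eS S * fA (maskCfg G S i X)))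
        ≤ P S * (eS S * EA) :=
      mul_le_mul_of_nonneg_left (hmono S) (hPnonneg S)
    refine t2.trans_eq ?_
    ring
  have final2 : ∑ S : Finset V, P S * eS S
      = ∑ X : V → Bool, W p X * Real.exp (lam * ((percCluster G X i).ncard : ℝ)) := by
    have h1 : ∀ S : Finset V, P S * eS S = ∑ X : V → Bool, (W p X * Φ S X) * eS S := by
      intro S; rw [hP, Finset.sum_mul]
    rw [Finset.sum_congr rfl fun S _ => h1 S, Finset.sum_comm]
    refine Finset.sum_congr rfl fun X _ => ?_
    have h2 : ∑ S : Finset V, (W p X * Φ S X) * eS S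
        = W p X * ∑ S : Finset V, Φ S X * eS S := by
      rw [Finset.mul_sum]
      refine Finset.sum_congr rfl fun S _ => ?_
      ring
    rw [h2]
    congr 1
    have h3 : ∀ S : Finset V, Φ S X * eS S = if clF G X i = S then eS S else 0 := by
      intro S; simp only [hΦ]; split <;> simp
    rw [Finset.sum_congr rfl fun S _ => h3 S,
      Finset.sum_ite_eq Finset.univ (clF G X i) eS, if_pos (Finset.mem_univ _)]
    simp only [heS]
    rw [clF_card]
  calc ∑ X : V → Bool, W p X * fI X
      ≤ (∑ S : Finset V, P S * eS S) * EA := final1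
    _ = _ := by rw [final2]

/-- The main inequality, at the level of finite sums. -/
lemma main_sum {p : ℝ≥0∞} (hp : p ≤ 1) {lam : ℝ} (hlam : 0 ≤ lam) (A : Finset V) :
    ∑ X : V → Bool, W p X *
        Real.exp (lam * ((percClusterSet G X (↑A : Set V)).ncard : ℝ))
      ≤ ∏ i ∈ A, ∑ X : V → Bool, W p X *
          Real.exp (lam * ((percCluster G X i).ncard : ℝ)) := by
  classical
  induction A using Finset.induction_on with
  | empty =>
      have hempty : ∀ X : V → Bool,
          percClusterSet G X (↑(∅ : Finset V) : Set V) = (∅ : Set V) := by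
        intro X; simp [percClusterSet]
      have : ∑ X : V → Bool, W p X *
          Real.exp (lam * ((percClusterSet G X (↑(∅ : Finset V) : Set V)).ncard : ℝ)) = 1 := by
        have h1 : ∀ X : V → Bool, W p X *
            Real.exp (lam * ((percClusterSet G X (↑(∅ : Finset V) : Set V)).ncard : ℝ))
            = W p X := by
          intro X
          rw [hempty X]
          simp
        rw [Finset.sum_congr rfl fun X _ => h1 X]
        exact sum_W_general (ι := V) hp
      rw [this, Finset.prod_empty]
  | insert a s hni ih =>
      rw [Finset.prod_insert hni]
      refine (step_lemma hp hlam a s).trans ?_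
      refine mul_le_mul_of_nonneg_left ih ?_
      exact Finset.sum_nonneg fun X _ => mul_nonneg (W_nonneg p X) (Real.exp_pos _).le

end PercAux

end

noncomputable section

/-- **Exponential moments of cluster sizes factorize over the starting set.**
For site Bernoulli percolation on a connected graph `G`, any `λ ≥ 0` and any `A ⊆ V`,
`E_p[exp(λ |C_A|)] ≤ ∏_{i ∈ A} E_p[exp(λ |C_i|)]`. -/
theorem stmt1 {V : Type*} [Fintype V] (G : SimpleGraph V) (hG : G.Connected)
    (p : ℝ≥0∞) (hp : p ≤ 1) (lam : ℝ) (hlam : 0 ≤ lam) (A : Finset V) :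
    ∫ X, Real.exp (lam * (percClusterSet G X (A : Set V)).ncard)
        ∂(bernoulliProduct V p hp)
      ≤ ∏ i ∈ A,
          ∫ X, Real.exp (lam * (percCluster G X i).ncard) ∂(bernoulliProduct V p hp) := by
  classical
  rw [PercAux.integral_eq hp
    (fun X => Real.exp (lam * ((percClusterSet G X (A : Set V)).ncard : ℝ)))]
  rw [Finset.prod_congr rfl fun i _ => PercAux.integral_eq hp
    (fun X => Real.exp (lam * ((percCluster G X i).ncard : ℝ)))]
  exact PercAux.main_sum hp hlam A

end
end

section
/- Let Ω_1, Ω_2 be finite sets, Ω = Ω_1 × Ω_2, and let μ, ν be probability measures on Ω with marginals μ_i = μ∘π_i^{-1}, ν_i = ν∘π_i^{-1}. Let ε_1, ε_2, ε_3 ∈ [0,1). Suppose: (1) for every ξ, ξ' ∈ Ω_1 with positive first-marginal probability and every A ⊂ Ω_2, and for ρ ∈ {μ,ν}, |ρ(Ω_1×A | {ξ}×Ω_2) − ρ(Ω_1×A | {ξ'}×Ω_2)| ≤ ε_1; (2) the total variation distance between μ_2 and ν_2 is at most ε_2; (3) there is D ⊂ Ω_2 with μ_2(D) ≥ 1−ε_3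 and ν_2(D) ≥ 1−ε_3 such that for every y ∈ D and x ∈ Ω_1, μ(x,y)/μ_2(y) = ν(x,y)/ν_2(y). Then, setting ε = max(ε_1, √ε_2, ε_3), if ε ≤ 0.1, for any x ∈ Ω_1 with ν_1(x) > 0 one has 1 − 9ε ≤ μ_1(x)/ν_1(x) ≤ 1/(1 − 9ε). -/
theorem aux_ratio {Ω₁ Ω₂ : Type*} [Fintype Ω₁] [Fintype Ω₂]
    (μ ν : Ω₁ × Ω₂ → ℝ)
    (hμ0 : ∀ z, 0 ≤ μ z) (hν0 : ∀ z, 0 ≤ ν z)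
    (hν1 : ∑ z, ν z = 1)
    (ε : ℝ) (hε0 : 0 ≤ ε) (hε' : ε ≤ 0.1)
    (hmix : ∀ ξ ξ' : Ω₁, 0 < ∑ y, ν (ξ, y) → 0 < ∑ y, ν (ξ', y) → ∀ A : Finset Ω₂,
      |(∑ y ∈ A, ν (ξ, y)) / (∑ y, ν (ξ, y)) - (∑ y ∈ A, ν (ξ', y)) / (∑ y, ν (ξ', y))| ≤ ε)
    (hTV : ∑ y, |(∑ x', μ (x', y)) - (∑ x', ν (x', y))| ≤ 2 * ε ^ 2)
    (D : Finset Ω₂) (hD : 1 - ε ≤ ∑ y ∈ D, ∑ x', ν (x', y))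
    (hDeq : ∀ y ∈ D, ∀ x : Ω₁,
      μ (x, y) / (∑ x', μ (x', y)) = ν (x, y) / (∑ x', ν (x', y)))
    (x : Ω₁) (hx : 0 < ∑ y, ν (x, y)) :
    (1 - 5 * ε) * (∑ y, ν (x, y)) ≤ ∑ y, μ (x, y) := by
  classical
  set ν₂ : Ω₂ → ℝ := fun y => ∑ x', ν (x', y) with hν₂def
  set μ₂ : Ω₂ → ℝ := fun y => ∑ x', μ (x', y) with hμ₂def
  have hν₂0 : ∀ y, 0 ≤ ν₂ y := fun y => Finset.sum_nonneg fun _ _ => hν0 _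
  have hμ₂0 : ∀ y, 0 ≤ μ₂ y := fun y => Finset.sum_nonneg fun _ _ => hμ0 _
  set B : Finset Ω₂ := Finset.univ.filter (fun y => ε * ν₂ y < ν₂ y - μ₂ y) with hBdef
  have hBsum : ∑ y ∈ B, ν₂ y ≤ 2 * ε := by
    have key : ε * ∑ y ∈ B, ν₂ y ≤ 2 * ε ^ 2 := by
      rw [Finset.mul_sum]
      calc ∑ y ∈ B, ε * ν₂ y ≤ ∑ y ∈ B, |μ₂ y - ν₂ y| := by
            apply Finset.sum_le_sum
            intro y hy
            simp only [hBdef, Finset.mem_filter, Finset.mem_univ, true_and] at hy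
            rw [abs_sub_comm]
            exact le_trans (le_of_lt hy) (le_abs_self _)
        _ ≤ ∑ y, |μ₂ y - ν₂ y| :=
            Finset.sum_le_sum_of_subset_of_nonneg (Finset.subset_univ _)
              (fun _ _ _ => abs_nonneg _)
        _ ≤ 2 * ε ^ 2 := hTV
    rcases eq_or_lt_of_le hε0 with h0 | hpos
    · -- ε = 0 : B is empty
      have hB0 : B = ∅ := by
        rw [Finset.eq_empty_iff_forall_notMem]
        intro y hy
        simp only [hBdef, Finset.mem_filter, Finset.mem_univ, true_and] at hy
        have h2 : ∑ y', |μ₂ y' - ν₂ y'| ≤ 0 := by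
          rw [← h0] at hTV; simpa using hTV
        have h3 : |μ₂ y - ν₂ y| ≤ 0 := by
          have := Finset.single_le_sum (f := fun y' => |μ₂ y' - ν₂ y'|)
            (fun i _ => abs_nonneg _) (Finset.mem_univ y)
          linarith
        rw [← h0] at hy
        have h4 := abs_nonneg (μ₂ y - ν₂ y)
        have h5 : μ₂ y - ν₂ y ≤ |μ₂ y - ν₂ y| := le_abs_self _
        have h6 : -(μ₂ y - ν₂ y) ≤ |μ₂ y - ν₂ y| := neg_le_abs _
        linarith
      rw [hB0]; simp; linarith
    · nlinarith [key]
  set G : Finset Ω₂ := D \ B with hGdef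
  have hGν : 1 - 3 * ε ≤ ∑ y ∈ G, ν₂ y := by
    have h1 : ∑ y ∈ D, ν₂ y ≤ ∑ y ∈ G ∪ B, ν₂ y := by
      apply Finset.sum_le_sum_of_subset_of_nonneg
      · intro y hy
        by_cases h : y ∈ B
        · exact Finset.mem_union_right _ h
        · exact Finset.mem_union_left _ (Finset.mem_sdiff.mpr ⟨hy, h⟩)
      · exact fun _ _ _ => hν₂0 _
    have h2 : ∑ y ∈ G ∪ B, ν₂ y = ∑ y ∈ G, ν₂ y + ∑ y ∈ B, ν₂ y :=
      Finset.sum_union Finset.sdiff_disjoint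
    have hD' : 1 - ε ≤ ∑ y ∈ D, ν₂ y := hD
    linarith
  -- mixing: conditional mass of G given x is at least ν₂(G) − ε
  have hmixG : ((∑ y ∈ G, ν₂ y) - ε) * (∑ y, ν (x, y)) ≤ ∑ y ∈ G, ν (x, y) := by
    set c : ℝ := (∑ y ∈ G, ν (x, y)) / (∑ y, ν (x, y)) with hcdef
    have hc0 : 0 ≤ c := by
      apply div_nonneg _ (le_of_lt hx)
      exact Finset.sum_nonneg fun _ _ => hν0 _
    have hbound : ∀ ξ' : Ω₁, ∑ y ∈ G, ν (ξ', y) ≤ (∑ y, ν (ξ', y)) * (c + ε) := by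
      intro ξ'
      by_cases hpos : 0 < ∑ y, ν (ξ', y)
      · have h := (abs_le.mp (hmix ξ' x hpos hx G)).2
        rw [← hcdef] at h
        have : (∑ y ∈ G, ν (ξ', y)) / (∑ y, ν (ξ', y)) ≤ c + ε := by linarith
        calc ∑ y ∈ G, ν (ξ', y)
            = (∑ y ∈ G, ν (ξ', y)) / (∑ y, ν (ξ', y)) * (∑ y, ν (ξ', y)) := by
              field_simp
          _ ≤ (c + ε) * (∑ y, ν (ξ', y)) := by
              apply mul_le_mul_of_nonneg_right this (le_of_lt hpos)
          _ = (∑ y, ν (ξ', y)) * (c + ε) := by ring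
      · have hb0 : ∑ y, ν (ξ', y) = 0 :=
          le_antisymm (not_lt.mp hpos) (Finset.sum_nonneg fun _ _ => hν0 _)
        have hG0 : ∑ y ∈ G, ν (ξ', y) ≤ 0 := by
          rw [← hb0]
          exact Finset.sum_le_sum_of_subset_of_nonneg (Finset.subset_univ _)
            (fun _ _ _ => hν0 _)
        rw [hb0, zero_mul]
        exact hG0
    have hswap : ∑ y ∈ G, ν₂ y = ∑ ξ' : Ω₁, ∑ y ∈ G, ν (ξ', y) := by
      simp only [hν₂def]
      exact Finset.sum_comm
    have htot : ∑ ξ' : Ω₁, ∑ y, ν (ξ', y) = 1 := by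
      rw [← hν1, ← Fintype.sum_prod_type]
    have hsum : ∑ y ∈ G, ν₂ y ≤ c + ε := by
      calc ∑ y ∈ G, ν₂ y = ∑ ξ' : Ω₁, ∑ y ∈ G, ν (ξ', y) := hswap
        _ ≤ ∑ ξ' : Ω₁, (∑ y, ν (ξ', y)) * (c + ε) :=
            Finset.sum_le_sum fun ξ' _ => hbound ξ'
        _ = (∑ ξ' : Ω₁, ∑ y, ν (ξ', y)) * (c + ε) := by rw [Finset.sum_mul]
        _ = c + ε := by rw [htot, one_mul]
    have : ((∑ y ∈ G, ν₂ y) - ε) ≤ c := by linarith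
    calc ((∑ y ∈ G, ν₂ y) - ε) * (∑ y, ν (x, y))
        ≤ c * (∑ y, ν (x, y)) := mul_le_mul_of_nonneg_right this (le_of_lt hx)
      _ = ∑ y ∈ G, ν (x, y) := by rw [hcdef]; field_simp
  -- pointwise comparison on G
  have hpt : ∀ y ∈ G, (1 - ε) * ν (x, y) ≤ μ (x, y) := by
    intro y hy
    have hyD : y ∈ D := (Finset.mem_sdiff.mp hy).1
    have hyB : y ∉ B := (Finset.mem_sdiff.mp hy).2
    simp only [hBdef, Finset.mem_filter, Finset.mem_univ, true_and, not_lt] at hyB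
    have hratio : (1 - ε) * ν₂ y ≤ μ₂ y := by linarith
    have heq : μ (x, y) / μ₂ y = ν (x, y) / ν₂ y := hDeq y hyD x
    by_cases hν₂y : ν₂ y = 0
    · have hνxy : ν (x, y) = 0 := by
        have h := (Finset.sum_eq_zero_iff_of_nonneg (fun i _ => hν0 (i, y))).mp hν₂y
        exact h x (Finset.mem_univ x)
      rw [hνxy, mul_zero]
      exact hμ0 _
    · by_cases hμ₂y : μ₂ y = 0
      · have hμxy : μ (x, y) = 0 := by
          have h := (Finset.sum_eq_zero_iff_of_nonneg (fun i _ => hμ0 (i, y))).mp hμ₂y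
          exact h x (Finset.mem_univ x)
        have hν0' : ν (x, y) / ν₂ y = 0 := by rw [← heq, hμxy, zero_div]
        have hνxy : ν (x, y) = 0 := by
          field_simp [hν₂y] at hν0'
          simpa using hν0'
        rw [hμxy, hνxy, mul_zero]
      · have hν₂pos : 0 < ν₂ y := lt_of_le_of_ne (hν₂0 y) (Ne.symm hν₂y)
        have hμ₂pos : 0 < μ₂ y := lt_of_le_of_ne (hμ₂0 y) (Ne.symm hμ₂y)
        have hcross : μ (x, y) * ν₂ y = ν (x, y) * μ₂ y := by
          field_simp at heq
          linarith [heq]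
        nlinarith [hν0 (x, y), hcross, hratio, hν₂pos]
  -- put everything together
  have hGμ : (1 - ε) * (∑ y ∈ G, ν (x, y)) ≤ ∑ y ∈ G, μ (x, y) := by
    rw [Finset.mul_sum]
    exact Finset.sum_le_sum hpt
  have hGall : ∑ y ∈ G, μ (x, y) ≤ ∑ y, μ (x, y) :=
    Finset.sum_le_sum_of_subset_of_nonneg (Finset.subset_univ _) (fun _ _ _ => hμ0 _)
  have hGν' : (1 - 4 * ε) * (∑ y, ν (x, y)) ≤ ∑ y ∈ G, ν (x, y) := by
    have : (1 : ℝ) - 4 * ε ≤ (∑ y ∈ G, ν₂ y) - ε := by linarith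
    calc (1 - 4 * ε) * (∑ y, ν (x, y))
        ≤ ((∑ y ∈ G, ν₂ y) - ε) * (∑ y, ν (x, y)) :=
          mul_le_mul_of_nonneg_right this (le_of_lt hx)
      _ ≤ ∑ y ∈ G, ν (x, y) := hmixG
    
  nlinarith [hGμ, hGall, hGν', hx, hε0, hε']



/-- **Conditional factorization to ratio mixing** (Alexander-type lemma).
`μ, ν` are probability weights on `Ω₁ × Ω₂`. Assume: (1) conditional mixing of both
measures with error `ε₁`; (2) the total variation distance of the second marginals is at
most `ε₂`; (3) on an event `D` of second-marginal probability `≥ 1 - ε₃` for both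
measures, the conditional laws of the first coordinate given the second agree. Then,
with `ε = max(ε₁, √ε₂, ε₃) ≤ 0.1`, for every `x` with `ν₁(x) > 0` one has
`1 - 9ε ≤ μ₁(x)/ν₁(x) ≤ 1/(1 - 9ε)`. -/
theorem stmt4 {Ω₁ Ω₂ : Type*} [Fintype Ω₁] [Fintype Ω₂]
    (μ ν : Ω₁ × Ω₂ → ℝ)
    (hμ0 : ∀ z, 0 ≤ μ z) (hν0 : ∀ z, 0 ≤ ν z)
    (hμ1 : ∑ z, μ z = 1) (hν1 : ∑ z, ν z = 1)
    (ε₁ ε₂ ε₃ : ℝ)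
    (hε₁ : ε₁ ∈ Set.Ico (0:ℝ) 1) (hε₂ : ε₂ ∈ Set.Ico (0:ℝ) 1) (hε₃ : ε₃ ∈ Set.Ico (0:ℝ) 1)
    -- (1) mixing of μ and ν
    (h1 : ∀ ρ ∈ ({μ, ν} : Set (Ω₁ × Ω₂ → ℝ)), ∀ ξ ξ' : Ω₁,
      0 < ∑ y, ρ (ξ, y) → 0 < ∑ y, ρ (ξ', y) → ∀ A : Finset Ω₂,
        |(∑ y ∈ A, ρ (ξ, y)) / (∑ y, ρ (ξ, y))
            - (∑ y ∈ A, ρ (ξ', y)) / (∑ y, ρ (ξ', y))| ≤ ε₁)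
    -- (2) proximity of the second marginals in total variation
    (h2 : (∑ y, |(∑ x, μ (x, y)) - (∑ x, ν (x, y))|) / 2 ≤ ε₂)
    -- (3) conditional equality on an event D of large probability
    (h3 : ∃ D : Finset Ω₂,
      1 - ε₃ ≤ ∑ y ∈ D, ∑ x, μ (x, y) ∧
      1 - ε₃ ≤ ∑ y ∈ D, ∑ x, ν (x, y) ∧
      ∀ y ∈ D, ∀ x : Ω₁,
        μ (x, y) / (∑ x', μ (x', y)) = ν (x, y) / (∑ x', ν (x', y)))
    (ε : ℝ) (hε : ε = max ε₁ (max (Real.sqrt ε₂) ε₃)) (hε' : ε ≤ 0.1) :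
    ∀ x : Ω₁, 0 < ∑ y, ν (x, y) →
      1 - 9 * ε ≤ (∑ y, μ (x, y)) / (∑ y, ν (x, y)) ∧
        (∑ y, μ (x, y)) / (∑ y, ν (x, y)) ≤ 1 / (1 - 9 * ε) := by
  obtain ⟨D, hDμ, hDν, hDeq⟩ := h3
  have hε1ε : ε₁ ≤ ε := hε ▸ le_max_left _ _
  have hε3ε : ε₃ ≤ ε := hε ▸ le_trans (le_max_right _ _) (le_max_right _ _)
  have hε0 : 0 ≤ ε := le_trans hε₁.1 hε1ε
  have hε2ε : ε₂ ≤ ε ^ 2 := by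
    have h : Real.sqrt ε₂ ≤ ε := hε ▸ le_trans (le_max_left _ _) (le_max_right _ _)
    nlinarith [Real.sq_sqrt hε₂.1, Real.sqrt_nonneg ε₂]
  have hTVμν : ∑ y, |(∑ x', μ (x', y)) - (∑ x', ν (x', y))| ≤ 2 * ε ^ 2 := by linarith
  have hTVνμ : ∑ y, |(∑ x', ν (x', y)) - (∑ x', μ (x', y))| ≤ 2 * ε ^ 2 := by
    have : ∀ y : Ω₂, |(∑ x', ν (x', y)) - (∑ x', μ (x', y))|
        = |(∑ x', μ (x', y)) - (∑ x', ν (x', y))| := fun y => abs_sub_comm _ _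
    rw [Finset.sum_congr rfl fun y _ => this y]
    exact hTVμν
  have hmixν : ∀ ξ ξ' : Ω₁, 0 < ∑ y, ν (ξ, y) → 0 < ∑ y, ν (ξ', y) → ∀ A : Finset Ω₂,
      |(∑ y ∈ A, ν (ξ, y)) / (∑ y, ν (ξ, y)) - (∑ y ∈ A, ν (ξ', y)) / (∑ y, ν (ξ', y))| ≤ ε :=
    fun ξ ξ' h h' A =>
      le_trans (h1 ν (by simp) ξ ξ' h h' A) hε1ε
  have hmixμ : ∀ ξ ξ' : Ω₁, 0 < ∑ y, μ (ξ, y) → 0 < ∑ y, μ (ξ', y) → ∀ A : Finset Ω₂,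
      |(∑ y ∈ A, μ (ξ, y)) / (∑ y, μ (ξ, y)) - (∑ y ∈ A, μ (ξ', y)) / (∑ y, μ (ξ', y))| ≤ ε :=
    fun ξ ξ' h h' A =>
      le_trans (h1 μ (Set.mem_insert _ _) ξ ξ' h h' A) hε1ε
  intro x hx
  have hlow := aux_ratio μ ν hμ0 hν0 hν1 ε hε0 hε' hmixν hTVμν D (by linarith) hDeq x hx
  have hμpos : 0 < ∑ y, μ (x, y) := by nlinarith [hlow, hx]
  have hDeq' : ∀ y ∈ D, ∀ x : Ω₁,
      ν (x, y) / (∑ x', ν (x', y)) = μ (x, y) / (∑ x', μ (x', y)) :=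
    fun y hy x' => (hDeq y hy x').symm
  have hup := aux_ratio ν μ hν0 hμ0 hμ1 ε hε0 hε' hmixμ hTVνμ D (by linarith) hDeq' x hμpos
  have h9 : (0:ℝ) < 1 - 9 * ε := by linarith
  constructor
  · rw [le_div_iff₀ hx]
    nlinarith [hlow, hx]
  · rw [div_le_div_iff₀ hx h9]
    nlinarith [hup, hμpos]
end

section
/- In the patch exploration sampling setting, the inductively constructed random variable Y (defined by Y_{𝒱_k} = F^{Y_{𝒜_{k-1}}}_{𝒜_{k-1};𝒱_k}(U_k), where 𝒜_k = 𝒜_k(U_0,…,U_{k-1}) and 𝒱_k = 𝒜_k ∖ 𝒜_{k-1}) is well defined and has the same law as X. -/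
open MeasureTheory ProbabilityTheory
open scoped ENNReal

noncomputable section

/-- The configuration `Y` built by the patch exploration after `k` steps: at step `k+1`
the coordinates in `𝒱_{k+1} = 𝒜_{k+1} ∖ 𝒜_k` are sampled using the sampling function
`F` applied to the uniform variable `u (k+1)`, conditionally on the already explored
configuration. -/
def patchY {I : Type*} [DecidableEq I] {𝒳 : I → Type*}
    (A : ℕ → (ℕ → ℝ) → Finset I)
    (F : Finset I → Finset I → (∀ x, 𝒳 x) → ℝ → ∀ x, 𝒳 x)
    (y₀ : ∀ x, 𝒳 x) (u : ℕ → ℝ) : ℕ → ∀ x, 𝒳 x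
  | 0 => y₀
  | k + 1 => fun x =>
      if x ∈ A (k + 1) u \ A k u then
        F (A k u) (A (k + 1) u \ A k u) (patchY A F y₀ u k) (u (k + 1)) x
      else patchY A F y₀ u k x

/-- composing with a discrete-valued selector preserves measurability -/
lemma measurable_comp_discrete {α β γ : Type*} [MeasurableSpace α] [MeasurableSpace γ]
    [Countable β] (h : α → β) (hh : ∀ b, MeasurableSet {a | h a = b})
    (g : β → α → γ) (hg : ∀ b, Measurable (g b)) :
    Measurable (fun a => g (h a) a) := by
  intro s hs
  have he : (fun a => g (h a) a) ⁻¹' s = ⋃ b, ({a | h a = b} ∩ (g b) ⁻¹' s) := by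
    ext a
    simp only [Set.mem_preimage, Set.mem_iUnion, Set.mem_inter_iff, Set.mem_setOf_eq]
    constructor
    · intro ha; exact ⟨h a, rfl, ha⟩
    · rintro ⟨b, hb, ha⟩; rw [hb]; exact ha
  rw [he]
  exact MeasurableSet.iUnion fun b => (hh b).inter (hg b hs)

lemma patchY_prefix {I : Type*} [DecidableEq I] {𝒳 : I → Type*}
    (A : ℕ → (ℕ → ℝ) → Finset I)
    (F : Finset I → Finset I → (∀ x, 𝒳 x) → ℝ → ∀ x, 𝒳 x)
    (y₀ : ∀ x, 𝒳 x)
    (hAprefix : ∀ k u u', (∀ i < k, u i = u' i) → A k u = A k u')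
    (k : ℕ) (u u' : ℕ → ℝ) (h : ∀ i ≤ k, u i = u' i) :
    patchY A F y₀ u k = patchY A F y₀ u' k := by
  induction k with
  | zero => rfl
  | succ k ih =>
    have hk : ∀ i ≤ k, u i = u' i := fun i hi => h i (hi.trans (Nat.le_succ k))
    have h1 : A k u = A k u' := hAprefix k u u' (fun i hi => hk i hi.le)
    have h2 : A (k+1) u = A (k+1) u' :=
      hAprefix (k+1) u u' (fun i hi => h i (le_of_lt hi))
    show (fun x => if x ∈ A (k + 1) u \ A k u then
        F (A k u) (A (k + 1) u \ A k u) (patchY A F y₀ u k) (u (k + 1)) x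
      else patchY A F y₀ u k x) = _
    rw [ih hk, h1, h2, h (k+1) le_rfl]
    rfl

lemma patchY_measurable {I : Type*} [Fintype I] [DecidableEq I] {𝒳 : I → Type*}
    [∀ x, Fintype (𝒳 x)] [∀ x, MeasurableSpace (𝒳 x)] [∀ x, DiscreteMeasurableSpace (𝒳 x)]
    (A : ℕ → (ℕ → ℝ) → Finset I)
    (F : Finset I → Finset I → (∀ x, 𝒳 x) → ℝ → ∀ x, 𝒳 x)
    (y₀ : ∀ x, 𝒳 x)
    (hAmeas : ∀ k (J : Finset I), MeasurableSet {u : ℕ → ℝ | A k u = J})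
    (hFmeas : ∀ Λ J ξ, Measurable (F Λ J ξ))
    (k : ℕ) : Measurable (fun u : ℕ → ℝ => patchY A F y₀ u k) := by
  induction k with
  | zero => exact measurable_const
  | succ k ih =>
    have h1 : ∀ b : Finset I × Finset I × (∀ x, 𝒳 x),
        MeasurableSet {u : ℕ → ℝ | (A k u, A (k+1) u, patchY A F y₀ u k) = b} := by
      intro b
      have he : {u : ℕ → ℝ | (A k u, A (k+1) u, patchY A F y₀ u k) = b}
          = {u | A k u = b.1} ∩ ({u | A (k+1) u = b.2.1} ∩
            (fun u => patchY A F y₀ u k) ⁻¹' {b.2.2}) := by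
        ext u
        simp only [Set.mem_setOf_eq, Set.mem_inter_iff, Set.mem_preimage,
          Set.mem_singleton_iff, Prod.ext_iff]
      rw [he]
      exact (hAmeas k b.1).inter ((hAmeas (k+1) b.2.1).inter (ih (MeasurableSet.of_discrete)))
    have h2 : ∀ p : Finset I × Finset I × (∀ x, 𝒳 x),
        Measurable (fun (u : ℕ → ℝ) x =>
          if x ∈ p.2.1 \ p.1 then F p.1 (p.2.1 \ p.1) p.2.2 (u (k+1)) x else p.2.2 x) := by
      rintro ⟨B, B', ξ⟩
      apply measurable_pi_lambda
      intro x
      by_cases hx : x ∈ B' \ B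
      · simp only [hx, if_true]
        exact ((measurable_pi_apply x).comp (hFmeas B (B' \ B) ξ)).comp
          (measurable_pi_apply (k+1))
      · simp only [hx, if_false]
        exact measurable_const
    exact measurable_comp_discrete
      (fun u : ℕ → ℝ => (A k u, A (k+1) u, patchY A F y₀ u k)) h1
      (fun p (u : ℕ → ℝ) x =>
        if x ∈ p.2.1 \ p.1 then F p.1 (p.2.1 \ p.1) p.2.2 (u (k+1)) x else p.2.2 x) h2

section PatchSets

variable {I : Type*} [DecidableEq I] {𝒳 : I → Type*}
  (A : ℕ → (ℕ → ℝ) → Finset I)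
  (F : Finset I → Finset I → (∀ x, 𝒳 x) → ℝ → ∀ x, 𝒳 x)
  (y₀ : ∀ x, 𝒳 x)

/-- the event (in `u`-space) that the exploration set at time `k` is `B` and the sampled
configuration agrees with `η` on `B`. -/
def evS (k : ℕ) (B : Finset I) (η : ∀ x, 𝒳 x) : Set (ℕ → ℝ) :=
  {u | A k u = B ∧ ∀ x ∈ B, patchY A F y₀ u k x = η x}

/-- the refined event recording also the next exploration set. -/
def stepS (k : ℕ) (B B' : Finset I) (η : ∀ x, 𝒳 x) : Set (ℕ → ℝ) :=
  {u | A k u = B ∧ A (k + 1) u = B' ∧ ∀ x ∈ B, patchY A F y₀ u k x = η x}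

/-- the sampling success event for the uniform variable. -/
def smpS (B B' : Finset I) (η : ∀ x, 𝒳 x) : Set ℝ :=
  {t | ∀ x ∈ B' \ B, F B (B' \ B) η t x = η x}

lemma evS_decomp (hAmono : ∀ k u, A k u ⊆ A (k + 1) u)
    (hFrestrict : ∀ Λ J ξ ξ', (∀ x ∈ Λ, ξ x = ξ' x) → F Λ J ξ = F Λ J ξ')
    (k : ℕ) (B' : Finset I) (η : ∀ x, 𝒳 x) :
    evS A F y₀ (k + 1) B' η
      = ⋃ B : Finset I, (stepS A F y₀ k B B' η ∩ {u | u (k + 1) ∈ smpS F B B' η}) := by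
  ext u
  simp only [evS, stepS, smpS, Set.mem_setOf_eq, Set.mem_iUnion, Set.mem_inter_iff]
  constructor
  · rintro ⟨hB', hval⟩
    refine ⟨A k u, ⟨rfl, hB', ?_⟩, ?_⟩
    · -- values on A k u agree with η
      intro x hx
      have hx' : x ∈ B' := hB' ▸ (hAmono k u hx)
      have := hval x hx'
      have hnot : x ∉ A (k + 1) u \ A k u := by
        simp [Finset.mem_sdiff, hx]
      simpa [patchY, hnot] using this
    · -- the sampling event holds
      have hagree : ∀ x ∈ A k u, patchY A F y₀ u k x = η x := by
        intro x hx
        have hx' : x ∈ B' := hB' ▸ (hAmono k u hx)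
        have := hval x hx'
        have hnot : x ∉ A (k + 1) u \ A k u := by
          simp [Finset.mem_sdiff, hx]
        simpa [patchY, hnot] using this
      intro x hx
      have hx2 : x ∈ A (k+1) u \ A k u := by
        rw [hB']; exact hx
      have hxB' : x ∈ B' := (Finset.mem_sdiff.mp hx).1
      have := hval x hxB'
      simp only [patchY, hx2, if_pos] at this
      rw [← hFrestrict (A k u) (B' \ A k u) (patchY A F y₀ u k) η hagree]
      rw [hB'] at this
      exact this
  · rintro ⟨B, ⟨hB, hB', hval⟩, hsmp⟩
    refine ⟨hB', ?_⟩
    intro x hx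
    by_cases hxs : x ∈ B' \ B
    · have hx2 : x ∈ A (k+1) u \ A k u := by rw [hB, hB']; exact hxs
      have : patchY A F y₀ u (k+1) x
          = F (A k u) (A (k + 1) u \ A k u) (patchY A F y₀ u k) (u (k + 1)) x := by
        simp [patchY, hx2]
      rw [this, hB, hB']
      rw [hFrestrict B (B' \ B) (patchY A F y₀ u k) η hval]
      exact hsmp x hxs
    · have hxB : x ∈ B := by
        by_contra hc
        exact hxs (Finset.mem_sdiff.mpr ⟨hx, hc⟩)
      have hnot : x ∉ A (k + 1) u \ A k u := by rw [hB, hB']; exact hxs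
      have : patchY A F y₀ u (k+1) x = patchY A F y₀ u k x := by
        simp [patchY, hnot]
      rw [this]
      exact hval x hxB

lemma evS_partition (k : ℕ) (B : Finset I) (η : ∀ x, 𝒳 x) :
    evS A F y₀ k B η = ⋃ B' : Finset I, stepS A F y₀ k B B' η := by
  ext u
  simp only [evS, stepS, Set.mem_setOf_eq, Set.mem_iUnion]
  constructor
  · rintro ⟨h1, h2⟩; exact ⟨A (k+1) u, h1, rfl, h2⟩
  · rintro ⟨B', h1, _, h3⟩; exact ⟨h1, h3⟩

end PatchSets

/-- An event depending on `U_0, …, U_k` is independent of an event on `U_{k+1}`, and the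
latter has probability `volume (S ∩ [0,1))`. -/
lemma indep_step_aux {Ω : Type*} [MeasurableSpace Ω] (μ : Measure Ω) [IsProbabilityMeasure μ]
    (U : ℕ → Ω → ℝ) (hUmeas : ∀ n, Measurable (U n))
    (hUindep : iIndepFun U μ)
    (hUlaw : ∀ n, μ.map (U n) = volume.restrict (Set.Ico (0:ℝ) 1))
    (k : ℕ) (e : Set (ℕ → ℝ)) (he : MeasurableSet e)
    (hpre : ∀ u u' : ℕ → ℝ, (∀ i ≤ k, u i = u' i) → (u ∈ e ↔ u' ∈ e))
    (S : Set ℝ) (hS : MeasurableSet S) :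
    μ ((fun ω n => U n ω) ⁻¹' e ∩ (U (k+1)) ⁻¹' S)
      = μ ((fun ω n => U n ω) ⁻¹' e) * volume (S ∩ Set.Ico (0:ℝ) 1) := by
  classical
  set Sf : Finset ℕ := Finset.range (k+1) with hSf
  set Tf : Finset ℕ := {k+1} with hTf
  have hdisj : Disjoint Sf Tf := by
    simp [hSf, hTf, Finset.disjoint_singleton_right]
  have hind := hUindep.indepFun_finset Sf Tf hdisj hUmeas
  -- the extension map
  set ext : ({x // x ∈ Sf} → ℝ) → (ℕ → ℝ) :=
    fun v n => if h : n ∈ Sf then v ⟨n, h⟩ else 0 with hext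
  have hextmeas : Measurable ext := by
    apply measurable_pi_lambda
    intro n
    by_cases h : n ∈ Sf
    · simp only [hext, h, dif_pos]
      exact measurable_pi_apply _
    · simp only [hext, h, dif_neg, not_false_iff]
      exact measurable_const
  set s : Set ({x // x ∈ Sf} → ℝ) := ext ⁻¹' e with hs
  set t : Set ({x // x ∈ Tf} → ℝ) :=
    (fun v : {x // x ∈ Tf} → ℝ => v ⟨k+1, by simp [hTf]⟩) ⁻¹' S with ht
  have hsmeas : MeasurableSet s := hextmeas he
  have htmeas : MeasurableSet t := (measurable_pi_apply _) hS
  have claim1 : (fun ω (i : {x // x ∈ Sf}) => U i ω) ⁻¹' s = (fun ω n => U n ω) ⁻¹' e := by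
    ext ω
    simp only [Set.mem_preimage, hs]
    exact hpre _ _ (fun i hi => by
      simp only [hext]
      rw [dif_pos (Finset.mem_range.mpr (Nat.lt_succ_of_le hi))])
  have claim2 : (fun ω (i : {x // x ∈ Tf}) => U i ω) ⁻¹' t = (U (k+1)) ⁻¹' S := rfl
  have hmul := hind.measure_inter_preimage_eq_mul s t hsmeas htmeas
  rw [claim1, claim2] at hmul
  rw [hmul]
  congr 1
  rw [← Measure.map_apply (hUmeas (k+1)) hS, hUlaw (k+1), Measure.restrict_apply hS]

/-- **Patch exploration sampling produces the correct law.**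
In the patch exploration setting (finite index set `I`, finite spin spaces `𝒳 x`, a
random variable `X` with values in `∏ x, 𝒳 x`, i.i.d. uniform variables `U_k` on `[0,1)`,
increasing exploration sets `𝒜_k` depending only on `U_0, …, U_{k-1}` and stabilising to
`I` by time `T_*`, and sampling functions `F` realising the conditional laws of `X`), the
inductively constructed random variable `Y` is well defined and has the same law as `X`. -/
theorem stmt6 {I : Type*} [Fintype I] [DecidableEq I]
    {𝒳 : I → Type*} [∀ x, Fintype (𝒳 x)] [∀ x, MeasurableSpace (𝒳 x)]
    [∀ x, DiscreteMeasurableSpace (𝒳 x)]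
    {Ω : Type*} [MeasurableSpace Ω] (μ : Measure Ω) [IsProbabilityMeasure μ]
    -- the random variable X
    (X : Ω → ∀ x, 𝒳 x) (hX : Measurable X)
    -- the i.i.d. uniform variables on [0,1)
    (U : ℕ → Ω → ℝ) (hUmeas : ∀ n, Measurable (U n))
    (hUindep : iIndepFun U μ)
    (hUlaw : ∀ n, μ.map (U n) = volume.restrict (Set.Ico (0:ℝ) 1))
    -- the exploration sets 𝒜_k
    (A : ℕ → (ℕ → ℝ) → Finset I)
    (hA0 : ∀ u, A 0 u = ∅)
    (hAmono : ∀ k u, A k u ⊆ A (k + 1) u)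
    (hAprefix : ∀ k u u', (∀ i < k, u i = u' i) → A k u = A k u')
    (hAmeas : ∀ k (J : Finset I), MeasurableSet {u : ℕ → ℝ | A k u = J})
    (Tstar : ℕ) (hT : ∀ k u, Tstar ≤ k → A k u = Finset.univ)
    -- the sampling functions F
    (F : Finset I → Finset I → (∀ x, 𝒳 x) → ℝ → ∀ x, 𝒳 x)
    (hFmeas : ∀ Λ J ξ, Measurable (F Λ J ξ))
    (hFrestrict : ∀ Λ J ξ ξ', (∀ x ∈ Λ, ξ x = ξ' x) → F Λ J ξ = F Λ J ξ')
    (hFlaw : ∀ (Λ J : Finset I), Disjoint Λ J → ∀ ξ : ∀ x, 𝒳 x,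
      μ.map X {σ | ∀ x ∈ Λ, σ x = ξ x} ≠ 0 →
      ∀ η : ∀ x, 𝒳 x,
        volume {u ∈ Set.Ico (0:ℝ) 1 | ∀ x ∈ J, F Λ J ξ u x = η x}
          = (μ.map X)[|{σ | ∀ x ∈ Λ, σ x = ξ x}] {σ | ∀ x ∈ J, σ x = η x})
    -- an arbitrary initial configuration (irrelevant since 𝒜_0 = ∅)
    (y₀ : ∀ x, 𝒳 x) :
    μ.map (fun ω => patchY A F y₀ (fun n => U n ω) Tstar) = μ.map X := by
  classical
  haveI : IsProbabilityMeasure (μ.map X) := Measure.isProbabilityMeasure_map hX.aemeasurable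
  set ν := μ.map X with hν
  set π : Ω → ℕ → ℝ := fun ω n => U n ω with hπdef
  have hπ : Measurable π := measurable_pi_lambda _ hUmeas
  have hYmeas : ∀ k, Measurable (fun u : ℕ → ℝ => patchY A F y₀ u k) :=
    patchY_measurable A F y₀ hAmeas hFmeas
  -- measurability of the various events
  have hstepmeas : ∀ k B B' η, MeasurableSet (stepS A F y₀ k B B' η) := by
    intro k B B' η
    have he : stepS A F y₀ k B B' η = {u | A k u = B} ∩ ({u | A (k+1) u = B'} ∩
        (fun u => patchY A F y₀ u k) ⁻¹' {σ | ∀ x ∈ B, σ x = η x}) := rfl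
    rw [he]
    exact (hAmeas k B).inter ((hAmeas (k+1) B').inter ((hYmeas k) .of_discrete))
  have hsmpmeas : ∀ (B B' : Finset I) η, MeasurableSet (smpS F B B' η) := by
    intro B B' η
    have he : smpS F B B' η = (F B (B' \ B) η) ⁻¹' {σ | ∀ x ∈ B' \ B, σ x = η x} := rfl
    rw [he]
    exact (hFmeas _ _ _) .of_discrete
  -- prefix property of the step events
  have hsteppre : ∀ k (B B' : Finset I) η (u u' : ℕ → ℝ), (∀ i ≤ k, u i = u' i) →
      (u ∈ stepS A F y₀ k B B' η ↔ u' ∈ stepS A F y₀ k B B' η) := by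
    intro k B B' η u u' h
    have h1 : A k u = A k u' := hAprefix k u u' fun i hi => h i hi.le
    have h2 : A (k+1) u = A (k+1) u' := hAprefix (k+1) u u' fun i hi => h i (Nat.lt_succ_iff.mp hi)
    have h3 := patchY_prefix A F y₀ hAprefix k u u' h
    simp only [stepS, Set.mem_setOf_eq, h1, h2, h3]
  -- splitting the event at time k+1 according to the previous exploration set
  have hsplit : ∀ k (B' : Finset I) η, μ (π ⁻¹' evS A F y₀ (k+1) B' η)
      = ∑ B : Finset I, μ (π ⁻¹' stepS A F y₀ k B B' η)
          * volume (smpS F B B' η ∩ Set.Ico (0:ℝ) 1) := by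
    intro k B' η
    have hd : Pairwise (Function.onFun Disjoint (fun B : Finset I =>
        π ⁻¹' (stepS A F y₀ k B B' η ∩ {u | u (k+1) ∈ smpS F B B' η}))) := by
      intro B1 B2 hne
      simp only [Function.onFun]
      rw [Set.disjoint_left]
      rintro ω ⟨⟨h1, -, -⟩, -⟩ ⟨⟨h2, -, -⟩, -⟩
      exact hne (by rw [← h1, ← h2])
    have hm : ∀ B : Finset I, MeasurableSet
        (π ⁻¹' (stepS A F y₀ k B B' η ∩ {u | u (k+1) ∈ smpS F B B' η})) :=
      fun B => hπ ((hstepmeas k B B' η).inter ((measurable_pi_apply (k+1)) (hsmpmeas B B' η)))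
    rw [evS_decomp A F y₀ hAmono hFrestrict k B' η, Set.preimage_iUnion,
      measure_iUnion hd hm, tsum_fintype]
    apply Finset.sum_congr rfl
    intro B _
    have he : π ⁻¹' (stepS A F y₀ k B B' η ∩ {u | u (k+1) ∈ smpS F B B' η})
        = π ⁻¹' (stepS A F y₀ k B B' η) ∩ (U (k+1)) ⁻¹' (smpS F B B' η) := rfl
    rw [he]
    exact indep_step_aux μ U hUmeas hUindep hUlaw k _ (hstepmeas k B B' η)
      (hsteppre k B B' η) _ (hsmpmeas B B' η)
  -- the value of the sampling probability
  have hvol : ∀ (B B' : Finset I) η, B ⊆ B' → ν {σ | ∀ x ∈ B, σ x = η x} ≠ 0 →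
      volume (smpS F B B' η ∩ Set.Ico (0:ℝ) 1)
        = (ν {σ | ∀ x ∈ B, σ x = η x})⁻¹ * ν {σ | ∀ x ∈ B', σ x = η x} := by
    intro B B' η hBB hne
    have hd : Disjoint B (B' \ B) := Finset.disjoint_sdiff
    have hl := hFlaw B (B' \ B) hd η hne η
    have he : {u ∈ Set.Ico (0:ℝ) 1 | ∀ x ∈ B' \ B, F B (B' \ B) η u x = η x}
        = smpS F B B' η ∩ Set.Ico (0:ℝ) 1 := by
      ext u
      simp only [Set.mem_sep_iff, smpS, Set.mem_inter_iff, Set.mem_setOf_eq]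
      tauto
    rw [he, cond_apply MeasurableSet.of_discrete ν] at hl
    rw [hl]
    congr 1
    have : {σ : ∀ x, 𝒳 x | ∀ x ∈ B, σ x = η x} ∩ {σ | ∀ x ∈ B' \ B, σ x = η x}
        = {σ | ∀ x ∈ B', σ x = η x} := by
      ext σ
      simp only [Set.mem_inter_iff, Set.mem_setOf_eq]
      constructor
      · rintro ⟨h1, h2⟩ x hx
        by_cases hxB : x ∈ B
        · exact h1 x hxB
        · exact h2 x (Finset.mem_sdiff.mpr ⟨hx, hxB⟩)
      · intro h
        exact ⟨fun x hx => h x (hBB hx), fun x hx => h x (Finset.mem_sdiff.mp hx).1⟩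
    rw [this]
  -- events with a ν-null revealed patch are null
  have H0 : ∀ k (B : Finset I) η, ν {σ | ∀ x ∈ B, σ x = η x} = 0 →
      μ (π ⁻¹' evS A F y₀ k B η) = 0 := by
    intro k
    induction k with
    | zero =>
      intro B η h0
      by_cases hB : B = ∅
      · subst hB
        exfalso
        have he : {σ : ∀ x, 𝒳 x | ∀ x ∈ (∅ : Finset I), σ x = η x} = Set.univ := by
          ext σ; simp
        rw [he] at h0
        simp at h0
      · have he : π ⁻¹' evS A F y₀ 0 B η = ∅ := by
          ext ω
          simp only [Set.mem_preimage, evS, Set.mem_setOf_eq, Set.mem_empty_iff_false,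
            iff_false, not_and]
          intro h1
          exact fun _ => hB (by rw [← h1, hA0])
        rw [he]
        simp
    | succ k ih =>
      intro B' η h0
      rw [hsplit k B' η]
      apply Finset.sum_eq_zero
      intro B _
      by_cases hB : ν {σ | ∀ x ∈ B, σ x = η x} = 0
      · have hz : μ (π ⁻¹' stepS A F y₀ k B B' η) = 0 := by
          have hsub : π ⁻¹' stepS A F y₀ k B B' η ⊆ π ⁻¹' evS A F y₀ k B η :=
            fun ω h => ⟨h.1, h.2.2⟩
          exact le_antisymm ((measure_mono hsub).trans (ih B η hB).le) zero_le
        rw [hz, zero_mul]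
      · by_cases hemp : μ (π ⁻¹' stepS A F y₀ k B B' η) = 0
        · rw [hemp, zero_mul]
        · obtain ⟨ω, hω⟩ : (π ⁻¹' stepS A F y₀ k B B' η).Nonempty := by
            rw [Set.nonempty_iff_ne_empty]
            intro hc
            rw [hc] at hemp
            simp at hemp
          have hBB' : B ⊆ B' := by
            have h1 := hω.1
            have h2 := hω.2.1
            rw [← h1, ← h2]
            exact hAmono k (π ω)
          rw [hvol B B' η hBB' hB, h0, mul_zero, mul_zero]
  -- the main invariant
  have M : ∀ k η, (∑ B : Finset I, μ (π ⁻¹' evS A F y₀ k B η)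
      * (ν {η} * (ν {σ | ∀ x ∈ B, σ x = η x})⁻¹)) = ν {η} := by
    intro k
    induction k with
    | zero =>
      intro η
      have h1 : ∀ B ∈ (Finset.univ : Finset (Finset I)), B ≠ ∅ →
          μ (π ⁻¹' evS A F y₀ 0 B η) * (ν {η} * (ν {σ | ∀ x ∈ B, σ x = η x})⁻¹) = 0 := by
        intro B _ hB
        have he : π ⁻¹' evS A F y₀ 0 B η = ∅ := by
          ext ω
          simp only [Set.mem_preimage, evS, Set.mem_setOf_eq, Set.mem_empty_iff_false,
            iff_false, not_and]
          intro hc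
          exact fun _ => hB (by rw [← hc, hA0])
        rw [he]
        simp
      have h2 : (∅ : Finset I) ∉ (Finset.univ : Finset (Finset I)) →
          μ (π ⁻¹' evS A F y₀ 0 (∅ : Finset I) η)
            * (ν {η} * (ν {σ | ∀ x ∈ (∅ : Finset I), σ x = η x})⁻¹) = 0 :=
        fun h => absurd (Finset.mem_univ _) h
      rw [Finset.sum_eq_single (∅ : Finset I) h1 h2]
      have he1 : π ⁻¹' evS A F y₀ 0 (∅ : Finset I) η = Set.univ := by
        ext ω
        simp [evS, hA0]
      have he2 : {σ : ∀ x, 𝒳 x | ∀ x ∈ (∅ : Finset I), σ x = η x} = Set.univ := by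
        ext σ; simp
      rw [he1, he2, measure_univ, measure_univ, inv_one, mul_one, one_mul]
    | succ k ih =>
      intro η
      have key : ∀ B B' : Finset I, μ (π ⁻¹' stepS A F y₀ k B B' η) *
          (volume (smpS F B B' η ∩ Set.Ico (0:ℝ) 1) * (ν {η} * (ν {σ | ∀ x ∈ B', σ x = η x})⁻¹))
          = μ (π ⁻¹' stepS A F y₀ k B B' η) * (ν {η} * (ν {σ | ∀ x ∈ B, σ x = η x})⁻¹) := by
        intro B B'
        by_cases hemp : μ (π ⁻¹' stepS A F y₀ k B B' η) = 0
        · rw [hemp, zero_mul, zero_mul]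
        · obtain ⟨ω, hω⟩ : (π ⁻¹' stepS A F y₀ k B B' η).Nonempty := by
            rw [Set.nonempty_iff_ne_empty]
            intro hc
            rw [hc] at hemp
            simp at hemp
          have hBB' : B ⊆ B' := by
            have h1 := hω.1
            have h2 := hω.2.1
            rw [← h1, ← h2]
            exact hAmono k (π ω)
          have hB : ν {σ | ∀ x ∈ B, σ x = η x} ≠ 0 := by
            intro hc
            refine hemp (le_antisymm ?_ zero_le)
            have hsub : π ⁻¹' stepS A F y₀ k B B' η ⊆ π ⁻¹' evS A F y₀ k B η :=
              fun ω h => ⟨h.1, h.2.2⟩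
            exact (measure_mono hsub).trans (H0 k B η hc).le
          congr 1
          rw [hvol B B' η hBB' hB]
          by_cases hB' : ν {σ | ∀ x ∈ B', σ x = η x} = 0
          · have hη0 : ν {η} = 0 := by
              refine le_antisymm ?_ zero_le
              refine (measure_mono ?_).trans hB'.le
              intro σ hσ
              rw [Set.mem_singleton_iff] at hσ
              subst hσ
              intro x _
              rfl
            rw [hB', hη0]
            simp
          · have hB'top : ν {σ | ∀ x ∈ B', σ x = η x} ≠ ⊤ := measure_ne_top ν _
            calc (ν {σ | ∀ x ∈ B, σ x = η x})⁻¹ * ν {σ | ∀ x ∈ B', σ x = η x}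
                  * (ν {η} * (ν {σ | ∀ x ∈ B', σ x = η x})⁻¹)
                = (ν {σ | ∀ x ∈ B', σ x = η x} * (ν {σ | ∀ x ∈ B', σ x = η x})⁻¹)
                  * (ν {η} * (ν {σ | ∀ x ∈ B, σ x = η x})⁻¹) := by ring
              _ = ν {η} * (ν {σ | ∀ x ∈ B, σ x = η x})⁻¹ := by
                  rw [ENNReal.mul_inv_cancel hB' hB'top, one_mul]
      calc ∑ B' : Finset I, μ (π ⁻¹' evS A F y₀ (k+1) B' η)
            * (ν {η} * (ν {σ | ∀ x ∈ B', σ x = η x})⁻¹)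
          = ∑ B' : Finset I, ∑ B : Finset I, μ (π ⁻¹' stepS A F y₀ k B B' η) *
              (volume (smpS F B B' η ∩ Set.Ico (0:ℝ) 1)
                * (ν {η} * (ν {σ | ∀ x ∈ B', σ x = η x})⁻¹)) := by
            refine Finset.sum_congr rfl fun B' _ => ?_
            rw [hsplit k B' η, Finset.sum_mul]
            refine Finset.sum_congr rfl fun B _ => ?_
            rw [mul_assoc]
        _ = ∑ B' : Finset I, ∑ B : Finset I, μ (π ⁻¹' stepS A F y₀ k B B' η)
              * (ν {η} * (ν {σ | ∀ x ∈ B, σ x = η x})⁻¹) := by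
            refine Finset.sum_congr rfl fun B' _ => ?_
            exact Finset.sum_congr rfl fun B _ => key B B'
        _ = ∑ B : Finset I, (∑ B' : Finset I, μ (π ⁻¹' stepS A F y₀ k B B' η))
              * (ν {η} * (ν {σ | ∀ x ∈ B, σ x = η x})⁻¹) := by
            rw [Finset.sum_comm]
            exact Finset.sum_congr rfl fun B _ => (Finset.sum_mul _ _ _).symm
        _ = ∑ B : Finset I, μ (π ⁻¹' evS A F y₀ k B η)
              * (ν {η} * (ν {σ | ∀ x ∈ B, σ x = η x})⁻¹) := by
            refine Finset.sum_congr rfl fun B _ => ?_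
            congr 1
            have hd : Pairwise (Function.onFun Disjoint (fun B' : Finset I =>
                π ⁻¹' stepS A F y₀ k B B' η)) := by
              intro B1 B2 hne
              simp only [Function.onFun]
              rw [Set.disjoint_left]
              rintro ω ⟨-, h1, -⟩ ⟨-, h2, -⟩
              exact hne (by rw [← h1, ← h2])
            have hm : ∀ B' : Finset I, MeasurableSet (π ⁻¹' stepS A F y₀ k B B' η) :=
              fun B' => hπ (hstepmeas k B B' η)
            rw [evS_partition A F y₀ k B η, Set.preimage_iUnion, measure_iUnion hd hm,
              tsum_fintype]
        _ = ν {η} := ih η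
  -- conclusion
  have hYT : Measurable (fun ω => patchY A F y₀ (fun n => U n ω) Tstar) :=
    (hYmeas Tstar).comp hπ
  refine Measure.ext_of_singleton fun η => ?_
  rw [Measure.map_apply hYT MeasurableSet.of_discrete]
  have hset : (fun ω => patchY A F y₀ (fun n => U n ω) Tstar) ⁻¹' {η}
      = π ⁻¹' evS A F y₀ Tstar Finset.univ η := by
    ext ω
    simp only [Set.mem_preimage, Set.mem_singleton_iff, evS, Set.mem_setOf_eq]
    constructor
    · intro h
      exact ⟨hT Tstar (π ω) le_rfl, fun x _ => by rw [h]⟩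
    · rintro ⟨-, h2⟩
      funext x
      exact h2 x (Finset.mem_univ x)
  rw [hset]
  have hcylu : {σ : ∀ x, 𝒳 x | ∀ x ∈ (Finset.univ : Finset I), σ x = η x} = {η} := by
    ext σ
    simp [funext_iff]
  by_cases hη : ν {η} = 0
  · rw [hη]
    refine H0 Tstar Finset.univ η ?_
    rw [hcylu]
    exact hη
  · have hM := M Tstar η
    have h1 : ∀ B ∈ (Finset.univ : Finset (Finset I)), B ≠ Finset.univ →
        μ (π ⁻¹' evS A F y₀ Tstar B η)
          * (ν {η} * (ν {σ | ∀ x ∈ B, σ x = η x})⁻¹) = 0 := by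
      intro B _ hB
      have he : π ⁻¹' evS A F y₀ Tstar B η = ∅ := by
        ext ω
        simp only [Set.mem_preimage, evS, Set.mem_setOf_eq, Set.mem_empty_iff_false,
          iff_false, not_and]
        intro hc
        exact fun _ => hB (by rw [← hc]; exact hT Tstar (π ω) le_rfl)
      rw [he]
      simp
    have h2 : (Finset.univ : Finset I) ∉ (Finset.univ : Finset (Finset I)) →
        μ (π ⁻¹' evS A F y₀ Tstar (Finset.univ : Finset I) η)
          * (ν {η} * (ν {σ | ∀ x ∈ (Finset.univ : Finset I), σ x = η x})⁻¹) = 0 :=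
      fun h => absurd (Finset.mem_univ _) h
    rw [Finset.sum_eq_single (Finset.univ : Finset I) h1 h2] at hM
    rw [hcylu, ENNReal.mul_inv_cancel hη (measure_ne_top ν _), mul_one] at hM
    exact hM

end
end

section
/- Let ε_i > 0, i ∈ I a finite index family, and let events A_i satisfy P(A_i) ≥ 1 − ε_i under each of two probability measures P ∈ {μ, ν}. Suppose μ and ν satisfy conditions (1)–(3) of the conditional-factorization-to-ratio-mixing lemma with parameters ε_1 = ε_2 = ε_3 = Cnm e^{−ck} for constants C ≥ 0, c > 0 and integers n, m, k with k ≥ C'ln(nm). Then for any configuration ω on the inner block Δ with μ(X_Δ = ω) > 0, the ratio ν'(X_Δ = ω)/μ(X_Δ = ω) ≥ 1 − C''nm e^{−c''k} for the conditioned measure ν', with constants C'', c'' depending only on C, c, C'. -/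
set_option maxHeartbeats 1000000 in
/-- **From weak mixing estimates to a ratio bound via conditional factorization.**
Suppose each of finitely many events `A i` has probability at least `1 - εI i` under both
`μ` and `ν`, and that `μ, ν` (probability weights on `Ω₁ × Ω₂`) satisfy conditions
(1)–(3) of the conditional-factorization-to-ratio-mixing lemma with parameters
`ε₁ = ε₂ = ε₃ = C n m e^{-c k}`, for integers `n, m ≥ 1` and `k ≥ C' ln(n m)`. Then, for
suitable constants `C'', c''` depending only on `C, c, C'`, for every `x ∈ Ω₁` with
`μ₁(x) > 0`, the ratio of the first marginals satisfies
`ν₁(x)/μ₁(x) ≥ 1 - C'' n m e^{-c'' k}`. -/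
theorem stmt13 (C c C' : ℝ) (hC : 0 ≤ C) (hc : 0 < c) :
    ∃ C'' c'' : ℝ, 0 ≤ C'' ∧ 0 < c'' ∧
      ∀ (n m k : ℕ), 1 ≤ n → 1 ≤ m → C' * Real.log ((n : ℝ) * m) ≤ (k : ℝ) →
      ∀ (Ω₁ Ω₂ : Type) [Fintype Ω₁] [Fintype Ω₂],
      ∀ (μ ν : Ω₁ × Ω₂ → ℝ),
        (∀ z, 0 ≤ μ z) → (∀ z, 0 ≤ ν z) →
        (∑ z, μ z = 1) → (∑ z, ν z = 1) →
        -- the auxiliary events A i of large probability under both measures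
        ∀ (ι : Type) (s : Finset ι) (εI : ι → ℝ) (Aev : ι → Finset (Ω₁ × Ω₂)),
          (∀ i ∈ s, 0 < εI i) →
          (∀ i ∈ s, 1 - εI i ≤ ∑ z ∈ Aev i, μ z ∧ 1 - εI i ≤ ∑ z ∈ Aev i, ν z) →
        -- (1) mixing of μ and ν with error ε₁ = C n m e^{-c k}
        (∀ ρ ∈ ({μ, ν} : Set (Ω₁ × Ω₂ → ℝ)), ∀ ξ ξ' : Ω₁,
          0 < ∑ y, ρ (ξ, y) → 0 < ∑ y, ρ (ξ', y) → ∀ B : Finset Ω₂,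
            |(∑ y ∈ B, ρ (ξ, y)) / (∑ y, ρ (ξ, y))
                - (∑ y ∈ B, ρ (ξ', y)) / (∑ y, ρ (ξ', y))|
              ≤ C * n * m * Real.exp (-c * k)) →
        -- (2) total variation proximity of the second marginals, ε₂ = C n m e^{-c k}
        ((∑ y, |(∑ x, μ (x, y)) - (∑ x, ν (x, y))|) / 2 ≤ C * n * m * Real.exp (-c * k)) →
        -- (3) conditional equality on an event D, ε₃ = C n m e^{-c k}
        (∃ D : Finset Ω₂,
          1 - C * n * m * Real.exp (-c * k) ≤ ∑ y ∈ D, ∑ x, μ (x, y) ∧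
          1 - C * n * m * Real.exp (-c * k) ≤ ∑ y ∈ D, ∑ x, ν (x, y) ∧
          ∀ y ∈ D, ∀ x : Ω₁,
            μ (x, y) / (∑ x', μ (x', y)) = ν (x, y) / (∑ x', ν (x', y))) →
        ∀ x : Ω₁, 0 < ∑ y, μ (x, y) →
          1 - C'' * n * m * Real.exp (-c'' * k)
            ≤ (∑ y, ν (x, y)) / (∑ y, μ (x, y)) := by
  classical
  refine ⟨4*C+1, c/2, by positivity, by positivity, ?_⟩
  intro n m k hn hm _hk Ω₁ Ω₂ _ _ μ ν hμ0 hν0 hμ1 hν1 ι s εI Aev _hεI _hA h1 h2 h3 x hx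
  set ε : ℝ := C * n * m * Real.exp (-c * k) with hε_def
  have hε0 : 0 ≤ ε := by positivity
  set δ : ℝ := Real.exp (-(c/2) * k) with hδ_def
  have hδ0 : 0 < δ := Real.exp_pos _
  set E : ℝ := (4*C+1) * n * m * Real.exp (-(c/2) * k) with hE_def
  rcases le_or_gt (1 - E) 0 with hE1 | hE1
  · exact hE1.trans (div_nonneg (Finset.sum_nonneg fun y _ => hν0 _) hx.le)
  have hn1 : (1:ℝ) ≤ (n:ℝ) := by exact_mod_cast hn
  have hm1 : (1:ℝ) ≤ (m:ℝ) := by exact_mod_cast hm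
  have hnm : (1:ℝ) ≤ (n:ℝ) * m := by nlinarith
  have hδE : δ ≤ E := by
    rw [hδ_def, hE_def]
    have hone : (1:ℝ) ≤ (4*C+1) * n * m := by nlinarith
    have := mul_le_mul_of_nonneg_right hone (Real.exp_pos (-(c/2) * (k:ℝ))).le
    linarith
  have hδlt : δ < 1 := by linarith
  obtain ⟨D, hD1, hD2, hD3⟩ := h3
  set μ₂ : Ω₂ → ℝ := fun y => ∑ x', μ (x', y) with hμ₂_def
  set ν₂ : Ω₂ → ℝ := fun y => ∑ x', ν (x', y) with hν₂_def
  have hμ₂0 : ∀ y, 0 ≤ μ₂ y := fun y => Finset.sum_nonneg fun _ _ => hμ0 _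
  have hν₂0 : ∀ y, 0 ≤ ν₂ y := fun y => Finset.sum_nonneg fun _ _ => hν0 _
  set p : Ω₂ → Prop := fun y => (1-δ) * μ₂ y ≤ ν₂ y with hp_def
  set G : Finset Ω₂ := D.filter p with hG_def
  set Gc : Finset Ω₂ := D.filter (fun y => ¬ p y) with hGc_def
  -- pointwise comparison on G
  have hGpt : ∀ y ∈ G, (1-δ) * μ (x, y) ≤ ν (x, y) := by
    intro y hy
    obtain ⟨hyD, hyr⟩ := Finset.mem_filter.mp hy
    rcases eq_or_lt_of_le (hμ₂0 y) with h0 | h0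
    · have hle : μ (x, y) ≤ μ₂ y :=
        Finset.single_le_sum (f := fun x' => μ (x', y)) (fun i _ => hμ0 _)
          (Finset.mem_univ x)
      have hxy0 : μ (x, y) = 0 := le_antisymm (by linarith [h0.le, h0.symm.le]) (hμ0 _)
      rw [hxy0, mul_zero]; exact hν0 _
    · have hyr' : (1-δ) * μ₂ y ≤ ν₂ y := hyr
      have hν₂pos : 0 < ν₂ y := by nlinarith
      have heq := hD3 y hyD x
      rw [div_eq_div_iff h0.ne' hν₂pos.ne'] at heq
      nlinarith [hμ0 (x, y)]
  -- sum over Ω₁ of first marginals is 1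
  have hμ1' : ∑ ξ : Ω₁, ∑ y : Ω₂, μ (ξ, y) = 1 := by
    rw [← Fintype.sum_prod_type]; exact hμ1
  -- Step B : mixing gives  ∑_{y ∈ G} μ₂ y ≤ S/T + ε
  set S : ℝ := ∑ y ∈ G, μ (x, y) with hS_def
  have hS0 : 0 ≤ S := Finset.sum_nonneg fun _ _ => hμ0 _
  set T : ℝ := ∑ y, μ (x, y) with hT_def
  have hq0 : 0 ≤ S / T := div_nonneg hS0 hx.le
  have hB : ∑ y ∈ G, μ₂ y ≤ S / T + ε := by
    have key : ∀ ξ : Ω₁, ∑ y ∈ G, μ (ξ, y) ≤ (∑ y, μ (ξ, y)) * (S / T + ε) := by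
      intro ξ
      rcases le_or_gt (∑ y, μ (ξ, y)) 0 with hξ | hξ
      · have hz : ∑ y, μ (ξ, y) = 0 :=
          le_antisymm hξ (Finset.sum_nonneg fun _ _ => hμ0 _)
        have hzz : ∑ y ∈ G, μ (ξ, y) ≤ ∑ y, μ (ξ, y) :=
          Finset.sum_le_sum_of_subset_of_nonneg (Finset.subset_univ G)
            (fun i _ _ => hμ0 _)
        rw [hz] at hzz ⊢
        simpa using hzz
      · have hmix := h1 μ (Set.mem_insert μ {ν}) ξ x hξ hx G
        have habs := (abs_le.mp hmix).2
        have hdiv : (∑ y ∈ G, μ (ξ, y)) / (∑ y, μ (ξ, y)) ≤ S / T + ε := by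
          simp only [← hS_def, ← hT_def] at habs ⊢
          linarith
        calc ∑ y ∈ G, μ (ξ, y)
            = ((∑ y ∈ G, μ (ξ, y)) / (∑ y, μ (ξ, y))) * (∑ y, μ (ξ, y)) := by
              field_simp
          _ ≤ (S / T + ε) * (∑ y, μ (ξ, y)) :=
              mul_le_mul_of_nonneg_right hdiv hξ.le
          _ = (∑ y, μ (ξ, y)) * (S / T + ε) := by ring
    calc ∑ y ∈ G, μ₂ y = ∑ y ∈ G, ∑ ξ, μ (ξ, y) := rfl
      _ = ∑ ξ, ∑ y ∈ G, μ (ξ, y) := by rw [Finset.sum_comm]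
      _ ≤ ∑ ξ, (∑ y, μ (ξ, y)) * (S / T + ε) := Finset.sum_le_sum fun ξ _ => key ξ
      _ = (∑ ξ, ∑ y, μ (ξ, y)) * (S / T + ε) := by rw [Finset.sum_mul]
      _ = S / T + ε := by rw [hμ1', one_mul]
  -- Step C : ∑_{y ∈ G} μ₂ y ≥ 1 - ε - 2ε/δ
  have hbadsum : δ * ∑ y ∈ Gc, μ₂ y ≤ 2 * ε := by
    have h2' : ∑ y, |μ₂ y - ν₂ y| ≤ 2 * ε := by linarith [h2]
    have step : ∀ y ∈ Gc, δ * μ₂ y ≤ |μ₂ y - ν₂ y| := by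
      intro y hy
      obtain ⟨-, hyr⟩ := Finset.mem_filter.mp hy
      have hyr' : ¬ ((1-δ) * μ₂ y ≤ ν₂ y) := hyr
      push_neg at hyr'
      have hle : μ₂ y - ν₂ y ≤ |μ₂ y - ν₂ y| := le_abs_self _
      nlinarith [hν₂0 y]
    calc δ * ∑ y ∈ Gc, μ₂ y = ∑ y ∈ Gc, δ * μ₂ y := by rw [Finset.mul_sum]
      _ ≤ ∑ y ∈ Gc, |μ₂ y - ν₂ y| := Finset.sum_le_sum step
      _ ≤ ∑ y, |μ₂ y - ν₂ y| :=
          Finset.sum_le_sum_of_subset_of_nonneg (Finset.subset_univ _)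
            (fun i _ _ => abs_nonneg _)
      _ ≤ 2 * ε := h2'
  have hsplit : (∑ y ∈ G, μ₂ y) + ∑ y ∈ Gc, μ₂ y = ∑ y ∈ D, μ₂ y :=
    Finset.sum_filter_add_sum_filter_not D p μ₂
  have hC1 : 1 - ε - 2 * ε / δ ≤ ∑ y ∈ G, μ₂ y := by
    have hbad : ∑ y ∈ Gc, μ₂ y ≤ 2 * ε / δ := by
      rw [le_div_iff₀ hδ0]
      nlinarith
    have hDsum : 1 - ε ≤ ∑ y ∈ D, μ₂ y := hD1
    linarith
  -- Step A : ν₁ x ≥ (1-δ) S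
  have hA2 : (1 - δ) * S ≤ ∑ y, ν (x, y) := by
    calc (1 - δ) * S = ∑ y ∈ G, (1 - δ) * μ (x, y) := by rw [hS_def, Finset.mul_sum]
      _ ≤ ∑ y ∈ G, ν (x, y) := Finset.sum_le_sum hGpt
      _ ≤ ∑ y, ν (x, y) :=
          Finset.sum_le_sum_of_subset_of_nonneg (Finset.subset_univ G)
            (fun i _ _ => hν0 _)
  -- arithmetic wrap-up
  have hsplitexp : Real.exp (-c * (k:ℝ)) = Real.exp (-(c/2) * k) * Real.exp (-(c/2) * k) := by
    rw [← Real.exp_add]; congr 1; ring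
  have hεδ : 2 * ε / δ = 2 * (C * n * m) * Real.exp (-(c/2) * k) := by
    rw [hε_def, hδ_def, hsplitexp]
    field_simp [Real.exp_ne_zero]
  have hexp_le : Real.exp (-c * k) ≤ Real.exp (-(c/2) * k) := by
    apply Real.exp_le_exp.mpr
    have hk0 : (0:ℝ) ≤ (k:ℝ) := Nat.cast_nonneg k
    nlinarith
  have hsum_err : δ + 2 * ε + 2 * ε / δ ≤ E := by
    have ha : δ ≤ (n:ℝ) * m * Real.exp (-(c/2) * k) := by
      rw [hδ_def]; nlinarith [Real.exp_pos (-(c/2) * (k:ℝ))]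
    have hb : 2 * ε ≤ 2 * (C * n * m) * Real.exp (-(c/2) * k) := by
      rw [hε_def]
      have hcnm : (0:ℝ) ≤ C * n * m := by positivity
      nlinarith [hexp_le, hcnm]
    rw [hεδ, hE_def]
    nlinarith [Real.exp_pos (-(c/2) * (k:ℝ))]
  -- combine
  have hq_lb : 1 - 2*ε - 2*ε/δ ≤ S / T := by linarith
  have hST : (1 - 2*ε - 2*ε/δ) * T ≤ S := by
    have h := mul_le_mul_of_nonneg_right hq_lb hx.le
    rwa [div_mul_cancel₀ S hx.ne'] at h
  rw [le_div_iff₀ hx]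
  have hδδ : 0 ≤ 1 - δ := by linarith
  calc (1 - E) * T ≤ ((1 - δ) * (1 - 2*ε - 2*ε/δ)) * T := by
        apply mul_le_mul_of_nonneg_right _ hx.le
        have h0 : 0 ≤ δ * (2*ε + 2*ε/δ) := by positivity
        nlinarith
    _ = (1 - δ) * ((1 - 2*ε - 2*ε/δ) * T) := by ring
    _ ≤ (1 - δ) * S := mul_le_mul_of_nonneg_left hST hδδ
    _ ≤ ∑ y, ν (x, y) := hA2
end
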